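/- arXiv:1412.5476 — 5 statements merged into one kernel-verified Lean document; each statement's English description precedes it below -/
import Mathlib

section
/- Let d ≥ 2 and let G ≤ Aut(T_d) be a countable weakly branch group. Then the action of G on the boundary (∂T_d, μ) with the uniform Bernoulli measure μ is totally non-free: for every measurable set B ⊆ ∂T_d there exists a set A in the σ-algebra generated by the sets Fix(g) = {x : g•x = x}, g ∈ G, with μ(A Δ B) = 0. -/
open MeasureTheory
open scoped symmDiff ENNReal Pointwise

/-- Vertices of the `d`-regular rooted tree: finite words over the alphabet `Fin d`. -/
abbrev Word (d : ℕ) := List (Fin d)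

/-- A permutation of the vertex set is a tree automorphism if it preserves word length and the
prefix relation. -/
def IsTreeAut {d : ℕ} (g : Equiv.Perm (Word d)) : Prop :=
  (∀ v : Word d, (g v).length = v.length) ∧
  ∀ v w : Word d, v <+: w ↔ g v <+: g w

/-- The boundary of the `d`-regular rooted tree: infinite sequences over `Fin d`. -/
abbrev Boundary (d : ℕ) := ℕ → Fin d

/-- The length-`n` prefix of a boundary point, as a word. -/
def prefixWord {d : ℕ} (x : Boundary d) (n : ℕ) : Word d := List.ofFn fun i : Fin n => x i

/-- `act` realizes the boundary action of the tree automorphisms in `G`: for `g ∈ G`, the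
length-`n` prefix of `act g x` is `g` applied to the length-`n` prefix of `x`, for every `n`. -/
def IsBoundaryAction {d : ℕ} (G : Subgroup (Equiv.Perm (Word d)))
    (act : Equiv.Perm (Word d) → Boundary d → Boundary d) : Prop :=
  ∀ g ∈ G, ∀ (x : Boundary d) (n : ℕ), prefixWord (act g x) n = g (prefixWord x n)

/-- The cylinder of all boundary points having the word `v` as a prefix. -/
def cylinder {d : ℕ} (v : Word d) : Set (Boundary d) :=
  {x : Boundary d | prefixWord x v.length = v}

/-- The uniform Bernoulli measure: every cylinder on a word of length `n` has measure `d⁻ⁿ`. -/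
def IsUniformBernoulli {d : ℕ} (μ : Measure (Boundary d)) : Prop :=
  ∀ v : Word d, μ (cylinder v) = ((d : ℝ≥0∞)⁻¹) ^ v.length

/-- `G` acts transitively on the words of each fixed length. -/
def LevelTransitive {d : ℕ} (G : Subgroup (Equiv.Perm (Word d))) : Prop :=
  ∀ v w : Word d, v.length = w.length → ∃ g ∈ G, g v = w

/-- The rigid stabilizer of the word `v`: elements of `G` fixing every word that does not have
`v` as a prefix. -/
def ristSet {d : ℕ} (G : Subgroup (Equiv.Perm (Word d))) (v : Word d) :
    Set (Equiv.Perm (Word d)) :=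
  {g : Equiv.Perm (Word d) | g ∈ G ∧ ∀ w : Word d, ¬ v <+: w → g w = w}

/-- `G` is weakly branch: level transitive with all rigid stabilizers nontrivial. -/
def IsWeaklyBranch {d : ℕ} (G : Subgroup (Equiv.Perm (Word d))) : Prop :=
  LevelTransitive G ∧ ∀ v : Word d, ∃ g ∈ ristSet G v, g ≠ 1

/-- The rigid stabilizer of level `k`: the subgroup generated by the rigid stabilizers of all
words of length `k`. -/
def ristLevel {d : ℕ} (G : Subgroup (Equiv.Perm (Word d))) (k : ℕ) :
    Subgroup (Equiv.Perm (Word d)) :=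
  Subgroup.closure (⋃ v ∈ {v : Word d | v.length = k}, ristSet G v)

/-- `G` is branch: level transitive with all level rigid stabilizers of finite index in `G`. -/
def IsBranch {d : ℕ} (G : Subgroup (Equiv.Perm (Word d))) : Prop :=
  LevelTransitive G ∧ ∀ k : ℕ, (ristLevel G k).relIndex G ≠ 0

/-- The fixed-point set of `g` on the boundary, relative to the boundary action `act`. -/
def fixedSet {d : ℕ} (act : Equiv.Perm (Word d) → Boundary d → Boundary d)
    (g : Equiv.Perm (Word d)) : Set (Boundary d) :=
  {x : Boundary d | act g x = x}

/-- The support of `g` on the boundary: points moved by `g`. -/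
def suppSet {d : ℕ} (act : Equiv.Perm (Word d) → Boundary d → Boundary d)
    (g : Equiv.Perm (Word d)) : Set (Boundary d) :=
  {x : Boundary d | act g x ≠ x}


section Aux

variable {d : ℕ}

lemma prefixWord_length (x : Boundary d) (n : ℕ) : (prefixWord x n).length = n := by
  simp [prefixWord]

lemma prefixWord_take (x : Boundary d) {k n : ℕ} (h : k ≤ n) :
    (prefixWord x n).take k = prefixWord x k := by
  apply List.ext_getElem
  · simp [prefixWord, h]
  · intro i hi hi'
    simp [prefixWord, List.getElem_take]

lemma prefixWord_prefix (x : Boundary d) {k n : ℕ} (h : k ≤ n) :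
    prefixWord x k <+: prefixWord x n := by
  rw [← prefixWord_take x h]; exact List.take_prefix _ _

lemma mem_cylinder_of_prefix {x : Boundary d} {v : Word d} {n : ℕ}
    (hpre : v <+: prefixWord x n) : x ∈ cylinder v := by
  have hlen : v.length ≤ n := by
    simpa [prefixWord_length] using hpre.length_le
  have := List.prefix_iff_eq_take.mp hpre
  rw [prefixWord_take x hlen] at this
  exact this.symm

/-- An element of a rigid stabilizer fixes every boundary point outside the cylinder. -/
lemma act_fix_of_not_mem_cylinder {G : Subgroup (Equiv.Perm (Word d))}
    (hG : ∀ g ∈ G, IsTreeAut g)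
    {act : Equiv.Perm (Word d) → Boundary d → Boundary d} (hact : IsBoundaryAction G act)
    {g : Equiv.Perm (Word d)} {v : Word d} (hg : g ∈ ristSet G v)
    {x : Boundary d} (hx : x ∉ cylinder v) : act g x = x := by
  have hfix : ∀ n : ℕ, g (prefixWord x n) = prefixWord x n := by
    intro n
    rcases le_or_gt v.length n with h | h
    · exact hg.2 _ fun hpre => hx (mem_cylinder_of_prefix hpre)
    · have hk : g (prefixWord x v.length) = prefixWord x v.length :=
        hg.2 _ fun hpre => hx (mem_cylinder_of_prefix hpre)
      have hpre : g (prefixWord x n) <+: prefixWord x v.length := by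
        rw [← hk]
        exact ((hG g hg.1).2 _ _).mp (prefixWord_prefix x h.le)
      have hlen : (g (prefixWord x n)).length = n := by
        rw [(hG g hg.1).1, prefixWord_length]
      have := List.prefix_iff_eq_take.mp hpre
      rw [hlen, prefixWord_take x h.le] at this
      exact this
  funext i
  have h1 : prefixWord (act g x) (i + 1) = prefixWord x (i + 1) := by
    rw [hact g hg.1 x (i + 1), hfix]
  have h2 := List.ofFn_injective h1
  exact congrFun h2 ⟨i, Nat.lt_succ_self i⟩

/-- Every boundary point in a cylinder is moved by some element of the rigid stabilizer. -/
lemma exists_rist_moves {G : Subgroup (Equiv.Perm (Word d))}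
    (hG : ∀ g ∈ G, IsTreeAut g) (hWB : IsWeaklyBranch G)
    {act : Equiv.Perm (Word d) → Boundary d → Boundary d} (hact : IsBoundaryAction G act)
    {v : Word d} {x : Boundary d} (hx : x ∈ cylinder v) :
    ∃ g ∈ ristSet G v, act g x ≠ x := by
  obtain ⟨h, hh, hne⟩ := hWB.2 v
  obtain ⟨u₀, hu₀⟩ : ∃ u, h u ≠ u := by
    by_contra hc
    push_neg at hc
    exact hne (Equiv.ext hc)
  have hvu₀ : v <+: u₀ := by
    by_contra hc
    exact hu₀ (hh.2 u₀ hc)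
  set m := u₀.length with hm
  have hkm : v.length ≤ m := hvu₀.length_le
  set u := prefixWord x m with hu
  have hvu : v <+: u := by
    have : v = prefixWord x v.length := hx.symm
    rw [this, hu, ← prefixWord_take x hkm]
    exact List.take_prefix _ _
  obtain ⟨f, hfG, hf⟩ := hWB.1 u u₀ (by rw [hu, prefixWord_length])
  have hfinvlen : (f⁻¹ v).length = v.length := by
    have h1 := (hG f hfG).1 (f⁻¹ v)
    rw [Equiv.Perm.coe_inv, Equiv.apply_symm_apply] at h1
    exact h1.symm
  have hfv : f⁻¹ v = v := by
    have hpre : f⁻¹ v <+: u := by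
      refine ((hG f hfG).2 (f⁻¹ v) u).mpr ?_
      rw [Equiv.Perm.coe_inv, Equiv.apply_symm_apply, hf]
      exact hvu₀
    have h1 := List.prefix_iff_eq_take.mp hpre
    have h2 := List.prefix_iff_eq_take.mp hvu
    rw [hfinvlen] at h1
    rw [h1, ← h2]
  refine ⟨f⁻¹ * h * f, ⟨mul_mem (mul_mem (inv_mem hfG) hh.1) hfG, ?_⟩, ?_⟩
  · intro w hw
    have hvfw : ¬ v <+: f w := by
      intro hc
      apply hw
      have h1 : f (f⁻¹ v) <+: f w := by rwa [Equiv.Perm.coe_inv, Equiv.apply_symm_apply]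
      have h2 := ((hG f hfG).2 (f⁻¹ v) w).mpr h1
      rwa [hfv] at h2
    have h2 : h (f w) = f w := hh.2 _ hvfw
    simp [Equiv.Perm.mul_apply, h2]
  · have hmoves : (f⁻¹ * h * f) u ≠ u := by
      intro hc
      apply hu₀
      have : f ((f⁻¹ * h * f) u) = f u := by rw [hc]
      simpa [Equiv.Perm.mul_apply, hf] using this
    intro hc
    apply hmoves
    have := hact (f⁻¹ * h * f) (mul_mem (mul_mem (inv_mem hfG) hh.1) hfG) x m
    rw [hc] at this
    exact this.symm

/-- Each cylinder is exactly the union of the supports of the rigid stabilizer elements. -/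
lemma cylinder_eq_iUnion_suppSet {G : Subgroup (Equiv.Perm (Word d))}
    (hG : ∀ g ∈ G, IsTreeAut g) (hWB : IsWeaklyBranch G)
    {act : Equiv.Perm (Word d) → Boundary d → Boundary d} (hact : IsBoundaryAction G act)
    (v : Word d) :
    cylinder v = ⋃ g ∈ ristSet G v, suppSet act g := by
  ext x
  simp only [Set.mem_iUnion, exists_prop, suppSet, Set.mem_setOf_eq]
  constructor
  · intro hx
    exact exists_rist_moves hG hWB hact hx
  · rintro ⟨g, hg, hgx⟩
    by_contra hx
    exact hgx (act_fix_of_not_mem_cylinder hG hact hg hx)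

end Aux

/-- Every countable weakly branch group acts totally non-freely on the boundary of the tree
with the uniform Bernoulli measure. -/
theorem weaklyBranch_totallyNonFree
    {d : ℕ} (hd : 2 ≤ d) (G : Subgroup (Equiv.Perm (Word d)))
    (hG : ∀ g ∈ G, IsTreeAut g) (hGc : Countable G) (hWB : IsWeaklyBranch G)
    (act : Equiv.Perm (Word d) → Boundary d → Boundary d) (hact : IsBoundaryAction G act)
    (μ : Measure (Boundary d)) [IsProbabilityMeasure μ] (hμ : IsUniformBernoulli μ) :
    ∀ B : Set (Boundary d), MeasurableSet B →
      ∃ A : Set (Boundary d),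
        MeasurableSet[MeasurableSpace.generateFrom
          {s : Set (Boundary d) | ∃ g ∈ G, s = fixedSet act g}] A ∧
        μ (A ∆ B) = 0 := by
  intro B hB
  set F := MeasurableSpace.generateFrom
      {s : Set (Boundary d) | ∃ g ∈ G, s = fixedSet act g} with hF
  have hsupp : ∀ g ∈ G, MeasurableSet[F] (suppSet act g) := by
    intro g hg
    have : suppSet act g = (fixedSet act g)ᶜ := rfl
    rw [this]
    have hmem : fixedSet act g ∈
        {s : Set (Boundary d) | ∃ g ∈ G, s = fixedSet act g} := ⟨g, hg, rfl⟩
    exact (MeasurableSpace.measurableSet_generateFrom hmem).compl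
  have hGcount : (G : Set (Equiv.Perm (Word d))).Countable := Set.countable_coe_iff.mpr hGc
  have hcyl : ∀ v : Word d, MeasurableSet[F] (cylinder v) := by
    intro v
    rw [cylinder_eq_iUnion_suppSet hG hWB hact v]
    exact MeasurableSet.biUnion (hGcount.mono fun g hg => hg.1)
      fun g hg => hsupp g hg.1
  have hcoord : ∀ (n : ℕ) (a : Fin d), MeasurableSet[F] {x : Boundary d | x n = a} := by
    intro n a
    have heq : {x : Boundary d | x n = a} =
        ⋃ w ∈ {w : Fin (n + 1) → Fin d | w ⟨n, Nat.lt_succ_self n⟩ = a},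
          _root_.cylinder (List.ofFn w) := by
      ext x
      simp only [Set.mem_iUnion, exists_prop, Set.mem_setOf_eq, _root_.cylinder,
        List.length_ofFn]
      constructor
      · intro hx
        exact ⟨fun i => x i, hx, rfl⟩
      · rintro ⟨w, hw, hx⟩
        have := List.ofFn_injective hx
        rw [← hw]
        exact congrFun this ⟨n, Nat.lt_succ_self n⟩
    rw [heq]
    exact MeasurableSet.biUnion (Set.to_countable _) fun w _ => hcyl _
  have hmeasn : ∀ n : ℕ, Measurable[F] fun x : Boundary d => x n := by
    intro n
    exact measurable_to_countable' fun a => hcoord n a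
  have hid : @Measurable (Boundary d) (Boundary d) F MeasurableSpace.pi id :=
    measurable_pi_iff.mpr hmeasn
  exact ⟨B, hid hB, by simp⟩
end

section
/- Let d ≥ 2 and let G ≤ Aut(T_d) be a weakly branch group acting on the boundary X = ∂T_d with the uniform Bernoulli measure μ. Then for every clopen subset A ⊆ X (in the product topology) and every ε > 0 there exists g ∈ G such that supp(g) ⊆ A and μ(A \ supp(g)) < ε. Consequently, the action of G on (X, μ) is absolutely non-free: for every measurable set B and every ε > 0 there exists g ∈ G with μ(Fix(g) Δ B) < ε. -/
open MeasureTheory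
open scoped symmDiff ENNReal Pointwise

section PartA
namespace WB
variable {d : ℕ}

theorem prefixWord_length (x : Boundary d) (n : ℕ) : (prefixWord x n).length = n := by
  simp [prefixWord]

theorem prefixWord_take (x : Boundary d) {m n : ℕ} (h : m ≤ n) :
    (prefixWord x n).take m = prefixWord x m := by
  apply List.ext_getElem
  · simp [prefixWord, Nat.min_eq_left h]
  · intro i h1 h2
    simp only [prefixWord, List.getElem_take, List.getElem_ofFn]

theorem prefixWord_prefix (x : Boundary d) {m n : ℕ} (h : m ≤ n) :
    prefixWord x m <+: prefixWord x n := by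
  rw [List.prefix_iff_eq_take, prefixWord_length, prefixWord_take x h]

theorem eq_of_forall_prefixWord_eq {x y : Boundary d}
    (h : ∀ n, prefixWord x n = prefixWord y n) : x = y := by
  funext i
  have := h (i + 1)
  rw [prefixWord, prefixWord, List.ofFn_inj] at this
  exact congrFun this ⟨i, i.lt_succ_self⟩

theorem mem_cylinder {x : Boundary d} {v : Word d} :
    x ∈ cylinder v ↔ prefixWord x v.length = v := Iff.rfl

theorem mem_cylinder_prefixWord (x : Boundary d) (n : ℕ) : x ∈ cylinder (prefixWord x n) := by
  rw [mem_cylinder, prefixWord_length]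

theorem cylinder_mono {u v : Word d} (h : u <+: v) : cylinder v ⊆ cylinder u := by
  intro x hx
  rw [mem_cylinder] at hx ⊢
  rw [← prefixWord_take x h.length_le, hx]
  exact (List.prefix_iff_eq_take.mp h).symm

theorem prefix_of_mem_cylinder {x : Boundary d} {v : Word d} (hx : x ∈ cylinder v) {n : ℕ}
    (h : v.length ≤ n) : v <+: prefixWord x n := by
  rw [List.prefix_iff_eq_take, prefixWord_take x h, hx]

theorem mem_cylinder_of_prefix {x : Boundary d} {v : Word d} {n : ℕ}
    (h : v <+: prefixWord x n) : x ∈ cylinder v := by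
  have hl : v.length ≤ n := by
    simpa [prefixWord_length] using h.length_le
  rw [mem_cylinder, ← prefixWord_take x hl]
  exact (List.prefix_iff_eq_take.mp h).symm

theorem prefix_eq_of_length {p q w : Word d} (hp : p <+: w) (hq : q <+: w)
    (h : p.length = q.length) : p = q := by
  rw [List.prefix_iff_eq_take] at hp hq
  rw [hp, hq, h]

theorem cylinder_disjoint {v w : Word d} (hl : v.length = w.length) (hne : v ≠ w) :
    Disjoint (cylinder v) (cylinder w) := by
  rw [Set.disjoint_left]
  intro x hv hw
  rw [mem_cylinder] at hv hw
  exact hne (by rw [← hv, ← hw, hl])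

/-- All words of length `n` as a finset. -/
noncomputable def wordsOf (d n : ℕ) : Finset (Word d) :=
  Finset.univ.image (fun f : Fin n → Fin d => List.ofFn f)

theorem mem_wordsOf {n : ℕ} {w : Word d} : w ∈ wordsOf d n ↔ w.length = n := by
  constructor
  · intro h
    obtain ⟨f, -, rfl⟩ := Finset.mem_image.mp h
    simp
  · rintro rfl
    refine Finset.mem_image.mpr ⟨fun i => w.get i, Finset.mem_univ _, List.ofFn_get w⟩

/-- Length-`m` extensions of `u`. -/
noncomputable def extF (u : Word d) (m : ℕ) : Finset (Word d) :=
  (wordsOf d m).filter (fun w => u <+: w)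

theorem mem_extF {u w : Word d} {m : ℕ} : w ∈ extF u m ↔ w.length = m ∧ u <+: w := by
  simp [extF, mem_wordsOf]

theorem cylinder_eq_biUnion (u : Word d) {m : ℕ} (h : u.length ≤ m) :
    cylinder u = ⋃ w ∈ extF u m, cylinder w := by
  ext x
  simp only [Set.mem_iUnion, exists_prop]
  constructor
  · intro hx
    exact ⟨prefixWord x m, mem_extF.mpr ⟨prefixWord_length x m, prefix_of_mem_cylinder hx h⟩,
      mem_cylinder_prefixWord x m⟩
  · rintro ⟨w, hw, hxw⟩
    exact cylinder_mono (mem_extF.mp hw).2 hxw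

theorem mem_cylinder_iff_coords {x : Boundary d} {v : Word d} :
    x ∈ cylinder v ↔ ∀ i : Fin v.length, x i = v.get i := by
  rw [mem_cylinder, List.ext_get_iff]
  simp only [prefixWord_length, true_and, prefixWord, List.get_ofFn]
  constructor
  · rintro ⟨-, h⟩ i
    simpa using h i (by simp) i.isLt
  · intro h
    exact ⟨by simp, fun n h1 h2 => by simpa using h ⟨n, h2⟩⟩

theorem measurableSet_cylinder (v : Word d) : MeasurableSet (cylinder v) := by
  have : cylinder v = ⋂ i : Fin v.length, (fun x : Boundary d => x i) ⁻¹' {v.get i} := by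
    ext x
    simp only [Set.mem_iInter, Set.mem_preimage, Set.mem_singleton_iff]
    exact mem_cylinder_iff_coords
  rw [this]
  exact MeasurableSet.iInter fun i => (measurable_pi_apply _) (MeasurableSet.singleton _)

theorem measurableSet_biUnion_cylinder (S : Finset (Word d)) :
    MeasurableSet (⋃ w ∈ S, cylinder w) :=
  S.finite_toSet.measurableSet_biUnion fun w _ => measurableSet_cylinder w

theorem pairwiseDisjoint_cylinder {S : Finset (Word d)} {m : ℕ}
    (hS : ∀ w ∈ S, w.length = m) : (↑S : Set (Word d)).PairwiseDisjoint cylinder := by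
  intro v hv w hw hne
  exact cylinder_disjoint (by rw [hS v hv, hS w hw]) hne

end WB
end PartA
namespace WB
variable {d : ℕ} {G : Subgroup (Equiv.Perm (Word d))}

/-- The rigid stabilizer as a subgroup. -/
def Rist (G : Subgroup (Equiv.Perm (Word d))) (v : Word d) : Subgroup (Equiv.Perm (Word d)) where
  carrier := ristSet G v
  one_mem' := ⟨one_mem G, fun _ _ => rfl⟩
  mul_mem' := by
    rintro a b ⟨haG, ha⟩ ⟨hbG, hb⟩
    exact ⟨mul_mem haG hbG, fun w hw => by
      rw [Equiv.Perm.mul_apply, hb w hw, ha w hw]⟩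
  inv_mem' := by
    rintro a ⟨haG, ha⟩
    refine ⟨inv_mem haG, fun w hw => ?_⟩
    have := ha w hw
    conv_lhs => rw [← this]
    simp

theorem mem_Rist {g : Equiv.Perm (Word d)} {v : Word d} : g ∈ Rist G v ↔ g ∈ ristSet G v :=
  Iff.rfl

theorem Rist_le_G {v : Word d} : Rist G v ≤ G := fun _ hg => hg.1

theorem Rist_mono {u v : Word d} (h : u <+: v) : Rist G v ≤ Rist G u := by
  rintro g ⟨hgG, hg⟩
  exact ⟨hgG, fun w hw => hg w (fun hvw => hw (h.trans hvw))⟩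

variable (hG : ∀ g ∈ G, IsTreeAut g)

section TreeAut
include hG

theorem length_apply {g : Equiv.Perm (Word d)} (hg : g ∈ G) (w : Word d) :
    (g w).length = w.length := (hG g hg).1 w

theorem prefix_apply {g : Equiv.Perm (Word d)} (hg : g ∈ G) {v w : Word d} (h : v <+: w) :
    g v <+: g w := ((hG g hg).2 v w).mp h

theorem apply_fix_prefix {g : Equiv.Perm (Word d)} (hg : g ∈ G) {v w : Word d}
    (hw : g w = w) (h : v <+: w) : g v = v := by
  have h1 : g v <+: w := hw ▸ prefix_apply hG hg h
  exact prefix_eq_of_length h1 h (length_apply hG hg v)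

theorem rist_fix_self {g : Equiv.Perm (Word d)} {v : Word d} (hg : g ∈ Rist G v) : g v = v := by
  by_contra hne
  have hlen : (g v).length = v.length := length_apply hG (Rist_le_G hg) v
  have hnp : ¬ v <+: g v := fun h => hne (h.eq_of_length hlen.symm).symm
  exact hne (g.injective (hg.2 (g v) hnp))

theorem rist_prefix_apply {g : Equiv.Perm (Word d)} {v : Word d} (hg : g ∈ Rist G v)
    {q : Word d} (h : v <+: q) : v <+: g q := by
  have := prefix_apply hG (Rist_le_G hg) h
  rwa [rist_fix_self hG hg] at this

/-- Rigid stabilizers of distinct same-length words commute. -/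
theorem rist_commute {v w : Word d} (hl : v.length = w.length) (hne : v ≠ w)
    {a b : Equiv.Perm (Word d)} (ha : a ∈ Rist G v) (hb : b ∈ Rist G w) :
    Commute a b := by
  have key : ∀ q : Word d, (a * b) q = (b * a) q := by
    intro q
    by_cases hv : v <+: q
    · have hw : ¬ w <+: q := fun hw => hne (prefix_eq_of_length hv hw hl)
      have h1 : b q = q := hb.2 q hw
      have h2 : ¬ w <+: a q := fun hw' =>
        hne (prefix_eq_of_length (rist_prefix_apply hG ha hv) hw' hl)
      simp only [Equiv.Perm.mul_apply, h1, hb.2 _ h2]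
    · by_cases hw : w <+: q
      · have h1 : a q = q := ha.2 q hv
        have h2 : ¬ v <+: b q := fun hv' =>
          hne (prefix_eq_of_length hv' (rist_prefix_apply hG hb hw) hl)
        simp only [Equiv.Perm.mul_apply, h1, ha.2 _ h2]
      · simp only [Equiv.Perm.mul_apply, ha.2 q hv, hb.2 q hw, ha.2 q hv]
  exact Equiv.ext key

end TreeAut
end WB
namespace WB
variable {d : ℕ} {G : Subgroup (Equiv.Perm (Word d))}
  {act : Equiv.Perm (Word d) → Boundary d → Boundary d}
  (hG : ∀ g ∈ G, IsTreeAut g) (hact : IsBoundaryAction G act)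

section Act
include hact

theorem act_mul {g h : Equiv.Perm (Word d)} (hg : g ∈ G) (hh : h ∈ G) (x : Boundary d) :
    act (g * h) x = act g (act h x) := by
  apply eq_of_forall_prefixWord_eq
  intro n
  rw [hact _ (mul_mem hg hh), hact _ hg, hact _ hh, Equiv.Perm.mul_apply]

theorem act_one (x : Boundary d) : act 1 x = x := by
  apply eq_of_forall_prefixWord_eq
  intro n
  rw [hact _ (one_mem G)]
  rfl

theorem act_cancel {g : Equiv.Perm (Word d)} (hg : g ∈ G) {x y : Boundary d}
    (h : act g x = act g y) : x = y := by
  have : ∀ z, act g⁻¹ (act g z) = z := fun z => by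
    rw [← act_mul hact (inv_mem hg) hg, inv_mul_cancel, act_one hact]
  rw [← this x, h, this y]

theorem act_fixed_iff {g : Equiv.Perm (Word d)} (hg : g ∈ G) {x : Boundary d} :
    act g x = x ↔ ∀ n, g (prefixWord x n) = prefixWord x n := by
  constructor
  · intro h n
    rw [← hact _ hg, h]
  · intro h
    apply eq_of_forall_prefixWord_eq
    intro n
    rw [hact _ hg, h]

theorem act_moved {g : Equiv.Perm (Word d)} (hg : g ∈ G) {x : Boundary d} {n : ℕ}
    (h : g (prefixWord x n) ≠ prefixWord x n) : act g x ≠ x := fun hx =>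
  h ((act_fixed_iff hact hg).mp hx n)

theorem suppSet_subset_cylinder {g : Equiv.Perm (Word d)} {v : Word d} (hg : g ∈ Rist G v) :
    suppSet act g ⊆ cylinder v := by
  intro x hx
  by_contra hxv
  apply hx
  rw [act_fixed_iff hact (Rist_le_G hg)]
  intro n
  apply hg.2
  intro hpre
  exact hxv (mem_cylinder_of_prefix hpre)

theorem fixedSet_eq_iInter {g : Equiv.Perm (Word d)} (hg : g ∈ G) :
    fixedSet act g =
      ⋂ n, ⋃ w ∈ (wordsOf d n).filter (fun w => g w = w), cylinder w := by
  ext x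
  simp only [fixedSet, Set.mem_setOf_eq, Set.mem_iInter, Set.mem_iUnion, Finset.mem_filter,
    exists_prop, act_fixed_iff hact hg]
  constructor
  · intro h n
    exact ⟨prefixWord x n, ⟨mem_wordsOf.mpr (prefixWord_length x n), h n⟩,
      mem_cylinder_prefixWord x n⟩
  · rintro h n
    obtain ⟨w, ⟨hwl, hwf⟩, hxw⟩ := h n
    rw [mem_wordsOf] at hwl
    have : prefixWord x n = w := by rw [← hwl]; exact hxw
    rw [this]; exact hwf

theorem measurableSet_fixedSet {g : Equiv.Perm (Word d)} (hg : g ∈ G) :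
    MeasurableSet (fixedSet act g) := by
  rw [fixedSet_eq_iInter hact hg]
  exact MeasurableSet.iInter fun n => measurableSet_biUnion_cylinder _

omit hact in
theorem suppSet_eq_compl (g : Equiv.Perm (Word d)) :
    suppSet act g = (fixedSet act g)ᶜ := rfl

theorem measurableSet_suppSet {g : Equiv.Perm (Word d)} (hg : g ∈ G) :
    MeasurableSet (suppSet act g) :=
  (measurableSet_fixedSet hact hg).compl

include hG

theorem act_mem_cylinder {g : Equiv.Perm (Word d)} {w : Word d} (hg : g ∈ Rist G w)
    {x : Boundary d} (hx : x ∈ cylinder w) : act g x ∈ cylinder w := by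
  rw [mem_cylinder, hact _ (Rist_le_G hg), hx, rist_fix_self hG hg]

end Act

section Prod
variable {m : ℕ} {S : Finset (Word d)} {gs : Word d → Equiv.Perm (Word d)}

theorem prod_comm_aux (hG : ∀ g ∈ G, IsTreeAut g) (hS : ∀ w ∈ S, w.length = m)
    (hgs : ∀ w ∈ S, gs w ∈ Rist G w) :
    (↑S : Set (Word d)).Pairwise (Function.onFun Commute gs) := by
  intro v hv w hw hne
  exact rist_commute hG (by rw [hS v hv, hS w hw]) hne (hgs v hv) (hgs w hw)

variable (hS : ∀ w ∈ S, w.length = m) (hgs : ∀ w ∈ S, gs w ∈ Rist G w)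

include hG hS hgs

theorem prod_mem_G : S.noncommProd gs (prod_comm_aux hG hS hgs) ∈ G :=
  Subgroup.noncommProd_mem G _ fun w hw => Rist_le_G (hgs w hw)

theorem prod_mem_Rist {u : Word d} (hu : ∀ w ∈ S, u <+: w) :
    S.noncommProd gs (prod_comm_aux hG hS hgs) ∈ Rist G u :=
  Subgroup.noncommProd_mem _ _ fun w hw => Rist_mono (hu w hw) (hgs w hw)

theorem prod_apply_fix {q : Word d} (hq : ∀ w ∈ S, gs w q = q) :
    S.noncommProd gs (prod_comm_aux hG hS hgs) q = q := by
  refine Finset.noncommProd_induction S gs _ (fun π => π q = q) (fun a b ha hb => ?_) rfl hq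
  show (a * b) q = q
  rw [Equiv.Perm.mul_apply, hb, ha]

/-- On a point of the cylinder of `w₀ ∈ S`, the product acts as `gs w₀`. -/
theorem prod_act_single (hact : IsBoundaryAction G act) {w₀ : Word d} (hw₀ : w₀ ∈ S)
    {x : Boundary d} (hx : x ∈ cylinder w₀) :
    act (S.noncommProd gs (prod_comm_aux hG hS hgs)) x = act (gs w₀) x := by
  have hm : w₀.length = m := hS w₀ hw₀
  have key : ∀ n, (S.noncommProd gs (prod_comm_aux hG hS hgs)) (prefixWord x n)
      = (gs w₀) (prefixWord x n) := by
    intro n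
    rw [← Finset.noncommProd_erase_mul S hw₀ gs (prod_comm_aux hG hS hgs)]
    rw [Equiv.Perm.mul_apply]
    set q := (gs w₀) (prefixWord x n) with hqdef
    have : ∀ w ∈ S.erase w₀, gs w q = q := by
      intro w hw
      obtain ⟨hne, hwS⟩ := Finset.mem_erase.mp hw
      apply (hgs w hwS).2
      intro hpre
      -- w <+: q; derive contradiction
      by_cases hn : w₀.length ≤ n
      · have h1 : w₀ <+: prefixWord x n := prefix_of_mem_cylinder hx hn
        have h2 : w₀ <+: q := rist_prefix_apply hG (hgs w₀ hw₀) h1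
        exact hne (prefix_eq_of_length hpre h2 (by rw [hS w hwS, hm]))
      · push_neg at hn
        have h1 : ¬ w₀ <+: prefixWord x n := by
          intro hc
          have := hc.length_le
          rw [prefixWord_length] at this
          omega
        have hq' : q = prefixWord x n := by rw [hqdef, (hgs w₀ hw₀).2 _ h1]
        rw [hq'] at hpre
        have := hpre.length_le
        rw [prefixWord_length, hS w hwS] at this
        omega
    -- also need erase-prod trivial on q
    exact prod_apply_fix hG (fun w hw => hS w (Finset.mem_of_mem_erase hw))
      (fun w hw => hgs w (Finset.mem_of_mem_erase hw)) this
  apply eq_of_forall_prefixWord_eq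
  intro n
  rw [hact _ (prod_mem_G hG hS hgs), hact _ (Rist_le_G (hgs w₀ hw₀)), key n]

/-- Off the union of the cylinders, the product acts trivially. -/
theorem prod_act_fix (hact : IsBoundaryAction G act) {x : Boundary d}
    (hx : ∀ w ∈ S, x ∉ cylinder w) :
    act (S.noncommProd gs (prod_comm_aux hG hS hgs)) x = x := by
  rw [act_fixed_iff hact (prod_mem_G hG hS hgs)]
  intro n
  apply prod_apply_fix hG hS hgs
  intro w hw
  apply (hgs w hw).2
  intro hpre
  exact hx w hw (mem_cylinder_of_prefix hpre)

end Prod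
end WB
namespace WB
variable {d : ℕ} {G : Subgroup (Equiv.Perm (Word d))}

theorem measure_biUnion_cylinders (μ : MeasureTheory.Measure (Boundary d))
    (hμ : IsUniformBernoulli μ) {S : Finset (Word d)} {m : ℕ} (hS : ∀ w ∈ S, w.length = m) :
    μ (⋃ w ∈ S, cylinder w) = S.card * ((d : ℝ≥0∞)⁻¹) ^ m := by
  rw [MeasureTheory.measure_biUnion_finset (pairwiseDisjoint_cylinder hS)
    (fun w _ => measurableSet_cylinder w)]
  rw [Finset.sum_congr rfl (fun w hw => by rw [hμ w, hS w hw])]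
  simp [Finset.sum_const, nsmul_eq_mul]

/-- A divisor of `n` other than `n` is at most `n/2`. -/
theorem nat_dvd_half {a n : ℕ} (h : a ∣ n) (hne : a ≠ n) (hn : n ≠ 0) : 2 * a ≤ n := by
  obtain ⟨c, hc⟩ := h
  have hc2 : 2 ≤ c := by
    by_contra hlt
    push_neg at hlt
    interval_cases c <;> omega
  calc 2 * a ≤ a * c := by nlinarith
  _ = n := hc.symm

/-- Key combinatorial step: some element of the rigid stabilizer of `u` fixes at most half of
the words at some deeper level. -/
theorem half_lemma (hG : ∀ g ∈ G, IsTreeAut g) (hWB : IsWeaklyBranch G) (u : Word d) :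
    ∃ m, u.length < m ∧ ∃ h ∈ Rist G u,
      2 * ((extF u m).filter (fun w => h w = w)).card ≤ (extF u m).card := by
  classical
  obtain ⟨g0, hg0r, hg0ne⟩ := hWB.2 u
  have hg0r' : g0 ∈ Rist G u := hg0r
  obtain ⟨w1, hw1⟩ : ∃ w, g0 w ≠ w := by
    by_contra hc
    push_neg at hc
    exact hg0ne (Equiv.ext hc)
  have huw1 : u <+: w1 := by
    by_contra hc
    exact hw1 (hg0r.2 w1 hc)
  set m := w1.length with hmdef
  have hum : u.length < m := by
    rcases lt_or_eq_of_le huw1.length_le with h | h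
    · exact h
    · exfalso
      have hu : u = w1 := huw1.eq_of_length h
      exact hw1 (by rw [← hu, rist_fix_self hG hg0r'])
  refine ⟨m, hum, ?_⟩
  -- the finite set of level-m extensions of u
  set X := extF u m with hXdef
  have hw1X : w1 ∈ X := mem_extF.mpr ⟨rfl, huw1⟩
  -- membership is preserved by elements of Rist G u
  have pres : ∀ r ∈ Rist G u, ∀ w, w ∈ X ↔ r w ∈ X := by
    intro r hr w
    simp only [hXdef, mem_extF]
    constructor
    · rintro ⟨hl, hp⟩
      exact ⟨by rw [length_apply hG (Rist_le_G hr), hl],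
        rist_prefix_apply hG hr hp⟩
    · rintro ⟨hl, hp⟩
      have h2 : u <+: r⁻¹ (r w) := rist_prefix_apply hG (inv_mem hr) hp
      rw [(by exact r.symm_apply_apply w : r⁻¹ (r w) = w)] at h2
      exact ⟨by rw [← hl, length_apply hG (Rist_le_G hr)], h2⟩
  -- the restriction homomorphism
  let π : ↥(Rist G u) →* Equiv.Perm {w : Word d // w ∈ X} :=
    { toFun := fun r => Equiv.Perm.subtypePerm r.1 (fun w => (pres r.1 r.2 w).symm)
      map_one' := by ext x; rfl
      map_mul' := by intro a b; ext x; rfl }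
  set K := π.range with hKdef
  letI : Fintype ↥K := Fintype.ofFinite _
  -- for each x, an element of K moving x
  have moving : ∀ x : {w : Word d // w ∈ X}, ∃ k : ↥K, k.1 x ≠ x := by
    rintro ⟨w, hwX⟩
    obtain ⟨hwl, hwp⟩ := mem_extF.mp hwX
    obtain ⟨t, htG, htw⟩ := hWB.1 w1 w (by rw [hwl])
    have htu : t u = u := by
      have h1 : t u <+: w := by rw [← htw]; exact prefix_apply hG htG huw1
      exact prefix_eq_of_length h1 hwp (length_apply hG htG u)
    have hcw : t * g0 * t⁻¹ ∈ Rist G u := by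
      refine ⟨mul_mem (mul_mem htG (Rist_le_G hg0r')) (inv_mem htG), fun q hq => ?_⟩
      have hnq : ¬ u <+: t⁻¹ q := by
        intro hc
        apply hq
        have := prefix_apply hG htG hc
        rwa [htu, (by exact t.apply_symm_apply q : t (t⁻¹ q) = q)] at this
      simp only [Equiv.Perm.mul_apply, hg0r.2 _ hnq]
      exact t.apply_symm_apply q
    have hmoves : (t * g0 * t⁻¹) w ≠ w := by
      simp only [Equiv.Perm.mul_apply, ← htw]
      rw [Equiv.Perm.coe_inv, Equiv.symm_apply_apply]
      intro hc
      exact hw1 (t.injective hc)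
    refine ⟨⟨π ⟨_, hcw⟩, MonoidHom.mem_range.mpr ⟨_, rfl⟩⟩, ?_⟩
    intro hc
    rw [Subtype.ext_iff] at hc
    exact hmoves hc
  -- stabilizers are at most half
  have stab_half : ∀ x : {w : Word d // w ∈ X},
      2 * (Finset.univ.filter fun k : ↥K => k.1 x = x).card ≤ Fintype.card ↥K := by
    intro x
    have hcardstab : (Finset.univ.filter fun k : ↥K => k.1 x = x).card
        = Nat.card ↥(MulAction.stabilizer ↥K x) := by
      rw [Nat.card_eq_fintype_card, Fintype.card_subtype]
      congr 1
    rw [hcardstab]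
    have hdvd := Subgroup.card_subgroup_dvd_card (MulAction.stabilizer ↥K x)
    rw [Nat.card_eq_fintype_card (α := ↥K)] at hdvd
    obtain ⟨k0, hk0⟩ := moving x
    have hne : MulAction.stabilizer ↥K x ≠ ⊤ := by
      intro hc
      exact hk0 (by
        have : k0 ∈ MulAction.stabilizer ↥K x := hc ▸ Subgroup.mem_top k0
        exact MulAction.mem_stabilizer_iff.mp this)
    have hnecard : Nat.card ↥(MulAction.stabilizer ↥K x) ≠ Fintype.card ↥K := by
      intro hc
      exact hne (Subgroup.eq_top_of_card_eq _ (by rw [hc, Nat.card_eq_fintype_card]))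
    exact nat_dvd_half hdvd hnecard Fintype.card_ne_zero
  -- Burnside-style counting
  have key : ∃ k : ↥K,
      2 * (Finset.univ.filter fun x => k.1 x = x).card
        ≤ Fintype.card {w : Word d // w ∈ X} := by
    by_contra hc
    push_neg at hc
    have h1 : ∀ k : ↥K, Fintype.card {w : Word d // w ∈ X} + 1
        ≤ 2 * (Finset.univ.filter fun x => k.1 x = x).card :=
      fun k => hc k
    have hsum : Fintype.card ↥K * (Fintype.card {w : Word d // w ∈ X} + 1)
        ≤ ∑ k : ↥K, 2 * (Finset.univ.filter fun x => k.1 x = x).card := by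
      calc Fintype.card ↥K * (Fintype.card {w : Word d // w ∈ X} + 1)
          = ∑ _k : ↥K, (Fintype.card {w : Word d // w ∈ X} + 1) := by
            rw [Finset.sum_const, smul_eq_mul, Finset.card_univ]
        _ ≤ _ := Finset.sum_le_sum fun k _ => h1 k
    have hswap : ∑ k : ↥K, (Finset.univ.filter fun x => k.1 x = x).card
        = ∑ x : {w : Word d // w ∈ X},
            (Finset.univ.filter fun k : ↥K => k.1 x = x).card := by
      simp only [Finset.card_filter]
      exact Finset.sum_comm
    have hbound : ∑ x : {w : Word d // w ∈ X},
        2 * (Finset.univ.filter fun k : ↥K => k.1 x = x).card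
        ≤ Fintype.card {w : Word d // w ∈ X} * Fintype.card ↥K := by
      calc ∑ x : {w : Word d // w ∈ X},
            2 * (Finset.univ.filter fun k : ↥K => k.1 x = x).card
          ≤ ∑ _x : {w : Word d // w ∈ X}, Fintype.card ↥K :=
            Finset.sum_le_sum fun x _ => stab_half x
        _ = Fintype.card {w : Word d // w ∈ X} * Fintype.card ↥K := by
            rw [Finset.sum_const, smul_eq_mul, Finset.card_univ]
    have hKpos : 0 < Fintype.card ↥K := Fintype.card_pos
    have : Fintype.card ↥K * (Fintype.card {w : Word d // w ∈ X} + 1)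
        ≤ Fintype.card {w : Word d // w ∈ X} * Fintype.card ↥K := by
      calc Fintype.card ↥K * (Fintype.card {w : Word d // w ∈ X} + 1)
          ≤ ∑ k : ↥K, 2 * (Finset.univ.filter fun x => k.1 x = x).card := hsum
        _ = 2 * ∑ k : ↥K, (Finset.univ.filter fun x => k.1 x = x).card := by
            rw [Finset.mul_sum]
        _ = ∑ x : {w : Word d // w ∈ X},
              2 * (Finset.univ.filter fun k : ↥K => k.1 x = x).card := by
            rw [hswap, Finset.mul_sum]
        _ ≤ _ := hbound
    nlinarith
  obtain ⟨k, hk⟩ := key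
  obtain ⟨r, hr⟩ := MonoidHom.mem_range.mp k.2
  refine ⟨r.1, r.2, ?_⟩
  have hcards : ((extF u m).filter (fun w => r.1 w = w)).card
      = (Finset.univ.filter fun x => k.1 x = x).card := by
    refine Finset.card_bij (fun w hw => ⟨w, (Finset.mem_filter.mp hw).1⟩) ?_ ?_ ?_
    · intro w hw
      obtain ⟨hwX, hwfix⟩ := Finset.mem_filter.mp hw
      refine Finset.mem_filter.mpr ⟨Finset.mem_univ _, ?_⟩
      rw [← hr]
      exact Subtype.ext hwfix
    · intro a ha b hb hab
      exact congrArg Subtype.val hab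
    · rintro ⟨w, hwX⟩ hx
      obtain ⟨-, hfix⟩ := Finset.mem_filter.mp hx
      rw [← hr] at hfix
      refine ⟨w, Finset.mem_filter.mpr ⟨hwX, ?_⟩, rfl⟩
      exact congrArg Subtype.val hfix
  rw [hcards]
  calc 2 * (Finset.univ.filter fun x => k.1 x = x).card
      ≤ Fintype.card {w : Word d // w ∈ X} := hk
    _ = (extF u m).card := by rw [Fintype.card_coe]
end WB
namespace WB
open MeasureTheory
variable {d : ℕ} {G : Subgroup (Equiv.Perm (Word d))}
  {act : Equiv.Perm (Word d) → Boundary d → Boundary d}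
  {μ : Measure (Boundary d)}

instance ristNonempty (G : Subgroup (Equiv.Perm (Word d))) (u : Word d) :
    Nonempty {g : Equiv.Perm (Word d) // g ∈ ristSet G u} :=
  ⟨⟨1, (Rist G u).one_mem⟩⟩

/-- Infimum of the measure of relative fixed sets over the rigid stabilizer of `u`. -/
noncomputable def inff (μ : Measure (Boundary d)) (act : Equiv.Perm (Word d) → Boundary d → Boundary d)
    (G : Subgroup (Equiv.Perm (Word d))) (u : Word d) : ℝ≥0∞ :=
  ⨅ g : {g : Equiv.Perm (Word d) // g ∈ ristSet G u}, μ (fixedSet act g.1 ∩ cylinder u)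

/-- Normalized supremum of `inff` over all vertices. -/
noncomputable def sstar (μ : Measure (Boundary d)) (act : Equiv.Perm (Word d) → Boundary d → Boundary d)
    (G : Subgroup (Equiv.Perm (Word d))) : ℝ≥0∞ :=
  ⨆ u : Word d, (d : ℝ≥0∞) ^ u.length * inff μ act G u

section Core
variable (hd : 2 ≤ d) (hG : ∀ g ∈ G, IsTreeAut g) (hWB : IsWeaklyBranch G)
  (hact : IsBoundaryAction G act) [IsProbabilityMeasure μ] (hμ : IsUniformBernoulli μ)

theorem dE_ne_zero (hd : 2 ≤ d) : (d : ℝ≥0∞) ≠ 0 := by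
  simp only [ne_eq, Nat.cast_eq_zero]
  omega

theorem dE_ne_top : (d : ℝ≥0∞) ≠ ⊤ := ENNReal.natCast_ne_top d

theorem pow_cancel (hd : 2 ≤ d) (L : ℕ) : (d : ℝ≥0∞) ^ L * ((d : ℝ≥0∞)⁻¹) ^ L = 1 := by
  rw [← mul_pow, ENNReal.mul_inv_cancel (dE_ne_zero hd) dE_ne_top, one_pow]

include hμ

theorem inff_le {u : Word d} {g : Equiv.Perm (Word d)} (hg : g ∈ ristSet G u) :
    inff μ act G u ≤ μ (fixedSet act g ∩ cylinder u) :=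
  iInf_le _ (⟨g, hg⟩ : {g : Equiv.Perm (Word d) // g ∈ ristSet G u})

theorem inff_le_cyl (u : Word d) : inff μ act G u ≤ ((d : ℝ≥0∞)⁻¹) ^ u.length := by
  refine le_trans (inff_le hμ (G := G) (act := act) (Rist G u).one_mem) ?_
  rw [← hμ u]
  exact measure_mono Set.inter_subset_right

theorem sstar_le_one (hd : 2 ≤ d) : sstar μ act G ≤ 1 := by
  refine iSup_le fun u => ?_
  calc (d : ℝ≥0∞) ^ u.length * inff μ act G u
      ≤ (d : ℝ≥0∞) ^ u.length * ((d : ℝ≥0∞)⁻¹) ^ u.length :=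
        mul_le_mul_right (inff_le_cyl hμ u) _
    _ = 1 := pow_cancel hd u.length

theorem inff_le_sstar (hd : 2 ≤ d) (u : Word d) :
    inff μ act G u ≤ ((d : ℝ≥0∞)⁻¹) ^ u.length * sstar μ act G := by
  have h1 : (d : ℝ≥0∞) ^ u.length * inff μ act G u ≤ sstar μ act G :=
    le_iSup (fun u : Word d => (d : ℝ≥0∞) ^ u.length * inff μ act G u) u
  calc inff μ act G u
      = ((d : ℝ≥0∞)⁻¹) ^ u.length * ((d : ℝ≥0∞) ^ u.length * inff μ act G u) := by
        rw [← mul_assoc, mul_comm (((d : ℝ≥0∞)⁻¹) ^ u.length), pow_cancel hd, one_mul]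
    _ ≤ ((d : ℝ≥0∞)⁻¹) ^ u.length * sstar μ act G := mul_le_mul_right h1 _

include hd hG hWB hact

theorem boost (u : Word d) {η : ℝ≥0∞} (hη : 0 < η) (hηt : η ≠ ⊤) :
    (d : ℝ≥0∞) ^ u.length * inff μ act G u ≤ 2⁻¹ * (sstar μ act G + η) + η := by
  classical
  set dE := (d : ℝ≥0∞) with hdE
  set L := u.length with hL
  obtain ⟨m, hm, h, hhR, hhalf⟩ := half_lemma hG hWB u
  set F : ℕ → Finset (Word d) := fun M => (extF u M).filter (fun w => h w = w) with hF
  set R : ℕ → Set (Boundary d) := fun j => ⋃ w ∈ F (m + j), cylinder w with hR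
  have hFlen : ∀ M, ∀ w ∈ F M, w.length = M := by
    intro M w hw
    exact (mem_extF.mp (Finset.mem_filter.mp hw).1).1
  have hFpre : ∀ M, ∀ w ∈ F M, u <+: w := by
    intro M w hw
    exact (mem_extF.mp (Finset.mem_filter.mp hw).1).2
  have hFfix : ∀ M, ∀ w ∈ F M, h w = w := fun M w hw => (Finset.mem_filter.mp hw).2
  have hRcyl : ∀ j, R j ⊆ cylinder u := by
    intro j x hx
    simp only [hR, Set.mem_iUnion, exists_prop] at hx
    obtain ⟨w, hw, hxw⟩ := hx
    exact cylinder_mono (hFpre _ w hw) hxw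
  have hRmeas : ∀ j, MeasurableSet (R j) := fun j => measurableSet_biUnion_cylinder _
  have hRanti : Antitone R := by
    refine antitone_nat_of_succ_le fun j => ?_
    intro x hx
    simp only [hR, Set.mem_iUnion, exists_prop] at hx ⊢
    obtain ⟨w, hw, hxw⟩ := hx
    refine ⟨prefixWord x (m + j), ?_, mem_cylinder_prefixWord _ _⟩
    have hxu : x ∈ cylinder u := cylinder_mono (hFpre _ w hw) hxw
    have hple : u.length ≤ m + j := by omega
    have hpw : prefixWord x (m + j) <+: w := by
      have h1 : prefixWord x (m + j) <+: prefixWord x (m + (j + 1)) :=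
        prefixWord_prefix x (by omega)
      have h3 := hFlen _ w hw
      have h2 : prefixWord x (m + (j + 1)) = w := by rw [← h3]; exact hxw
      rwa [h2] at h1
    refine Finset.mem_filter.mpr ⟨mem_extF.mpr ⟨prefixWord_length _ _,
      prefix_of_mem_cylinder hxu hple⟩, ?_⟩
    exact apply_fix_prefix hG (Rist_le_G hhR) (hFfix _ w hw) hpw
  have hFixInter : fixedSet act h ∩ cylinder u = ⋂ j, R j := by
    ext x
    simp only [Set.mem_inter_iff, Set.mem_iInter]
    constructor
    · rintro ⟨hxf, hxu⟩ j
      simp only [hR, Set.mem_iUnion, exists_prop]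
      refine ⟨prefixWord x (m + j), Finset.mem_filter.mpr ⟨mem_extF.mpr
        ⟨prefixWord_length _ _, prefix_of_mem_cylinder hxu (by omega)⟩, ?_⟩,
        mem_cylinder_prefixWord _ _⟩
      exact (act_fixed_iff hact (Rist_le_G hhR)).mp hxf (m + j)
    · intro hx
      refine ⟨?_, hRcyl 0 (hx 0)⟩
      show act h x = x
      rw [act_fixed_iff hact (Rist_le_G hhR)]
      intro n
      have hxn := hx n
      simp only [hR, Set.mem_iUnion, exists_prop] at hxn
      obtain ⟨w, hw, hxw⟩ := hxn
      have hpw : prefixWord x n <+: w := by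
        have h1 : prefixWord x n <+: prefixWord x (m + n) := prefixWord_prefix x (by omega)
        have h3 := hFlen _ w hw
        have h2 : prefixWord x (m + n) = w := by rw [← h3]; exact hxw
        rwa [h2] at h1
      exact apply_fix_prefix hG (Rist_le_G hhR) (hFfix _ w hw) hpw
  -- choose a deep level where the fixed region is almost the fixed set
  have hδpos : (0 : ℝ≥0∞) < η * (dE⁻¹) ^ L :=
    ENNReal.mul_pos hη.ne' (ENNReal.pow_pos (ENNReal.inv_pos.mpr dE_ne_top) L).ne'
  have htend : Filter.Tendsto (fun j => μ (R j)) Filter.atTop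
      (nhds (μ (fixedSet act h ∩ cylinder u))) := by
    rw [hFixInter]
    have := MeasureTheory.tendsto_measure_iInter_atTop (μ := μ)
      (fun j => (hRmeas j).nullMeasurableSet) hRanti ⟨0, measure_ne_top μ _⟩
    exact this
  have hlt : μ (fixedSet act h ∩ cylinder u)
      < μ (fixedSet act h ∩ cylinder u) + η * (dE⁻¹) ^ L :=
    ENNReal.lt_add_right (measure_ne_top μ _) hδpos.ne'
  obtain ⟨j₀, hj₀⟩ := (htend.eventually_lt_const hlt).exists
  set M := m + j₀ with hM
  -- the error term
  have herr : μ (R j₀ \ fixedSet act h) ≤ η * (dE⁻¹) ^ L := by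
    have hsub : fixedSet act h ∩ cylinder u ⊆ R j₀ := by
      rw [hFixInter]; exact Set.iInter_subset _ j₀
    have : R j₀ \ fixedSet act h = R j₀ \ (fixedSet act h ∩ cylinder u) := by
      ext x
      simp only [Set.mem_diff, Set.mem_inter_iff]
      exact ⟨fun ⟨h1, h2⟩ => ⟨h1, fun hc => h2 hc.1⟩, fun ⟨h1, h2⟩ =>
        ⟨h1, fun hc => h2 ⟨hc, hRcyl _ h1⟩⟩⟩
    rw [this, measure_diff hsub ((measurableSet_fixedSet hact
      (Rist_le_G hhR)).inter (measurableSet_cylinder u)).nullMeasurableSet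
      (measure_ne_top μ _)]
    exact tsub_le_iff_left.mpr hj₀.le
  -- select good elements at the vertices of F M
  have hsel : ∀ w ∈ F M, ∃ g ∈ ristSet G w,
      μ (fixedSet act g ∩ cylinder w) < (dE⁻¹) ^ M * (sstar μ act G + η) := by
    intro w hw
    have h1 : inff μ act G w ≤ (dE⁻¹) ^ M * sstar μ act G := by
      have := inff_le_sstar (μ := μ) (act := act) (G := G) hμ hd w
      rwa [hFlen _ w hw] at this
    have h2 : (dE⁻¹) ^ M * sstar μ act G < (dE⁻¹) ^ M * (sstar μ act G + η) := by
      rw [mul_add]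
      refine ENNReal.lt_add_right ?_ ?_
      · refine ENNReal.mul_ne_top ?_ ?_
        · exact ENNReal.pow_ne_top (ENNReal.inv_ne_top.mpr (dE_ne_zero hd))
        · exact ne_top_of_le_ne_top ENNReal.one_ne_top (sstar_le_one hμ hd)
      · exact (ENNReal.mul_pos (ENNReal.pow_pos (ENNReal.inv_pos.mpr dE_ne_top) M).ne'
          hη.ne').ne'
    have h3 : inff μ act G w < (dE⁻¹) ^ M * (sstar μ act G + η) := lt_of_le_of_lt h1 h2
    rw [inff, iInf_lt_iff] at h3
    obtain ⟨⟨g, hg⟩, hglt⟩ := h3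
    exact ⟨g, hg, hglt⟩
  choose gsel hgsel1 hgsel2 using hsel
  set gs : Word d → Equiv.Perm (Word d) := fun w =>
    if hw : w ∈ F M then gsel w hw else 1 with hgs
  have hgsR : ∀ w ∈ F M, gs w ∈ Rist G w := by
    intro w hw
    simp only [hgs, dif_pos hw]
    exact hgsel1 w hw
  have hgsFix : ∀ w ∈ F M, μ (fixedSet act (gs w) ∩ cylinder w)
      < (dE⁻¹) ^ M * (sstar μ act G + η) := by
    intro w hw
    simp only [hgs, dif_pos hw]
    exact hgsel2 w hw
  set P := (F M).noncommProd gs (prod_comm_aux hG (hFlen M) hgsR) with hP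
  have hPG : P ∈ G := prod_mem_G hG (hFlen M) hgsR
  set g := h * P with hgdef
  have hgR : g ∈ Rist G u := mul_mem hhR (prod_mem_Rist hG (hFlen M) hgsR (hFpre M))
  -- key inclusion
  have hincl : fixedSet act g ∩ cylinder u ⊆
      (⋃ w ∈ F M, (fixedSet act (gs w) ∩ cylinder w)) ∪ (R j₀ \ fixedSet act h) := by
    rintro x ⟨hxfix, hxcyl⟩
    have hxfix' : act g x = x := hxfix
    have hsplit : act g x = act h (act P x) := act_mul hact (Rist_le_G hhR) hPG x
    by_cases hxF : prefixWord x M ∈ F M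
    · set w := prefixWord x M with hw
      have hxw : x ∈ cylinder w := mem_cylinder_prefixWord x M
      have hPx : act P x = act (gs w) x :=
        prod_act_single hG (hFlen M) hgsR hact hxF hxw
      by_cases hfx : act (gs w) x = x
      · left
        simp only [Set.mem_iUnion, exists_prop]
        exact ⟨w, hxF, hfx, hxw⟩
      · right
        refine ⟨?_, ?_⟩
        · simp only [hR, Set.mem_iUnion, exists_prop]
          exact ⟨w, by rw [← hM]; exact hxF, hxw⟩
        · intro hxh
          apply hfx
          apply act_cancel hact (Rist_le_G hhR)
          rw [← hPx, ← hsplit, hxfix']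
          exact (hxh : act h x = x).symm
    · exfalso
      have hPx : act P x = x := by
        refine prod_act_fix hG (hFlen M) hgsR hact fun w' hw' hxw' => ?_
        apply hxF
        have h3 := hFlen M w' hw'
        have h4 : prefixWord x M = w' := by rw [← h3]; exact hxw'
        rw [h4]; exact hw'
      have hwext : prefixWord x M ∈ extF u M := mem_extF.mpr
        ⟨prefixWord_length _ _, prefix_of_mem_cylinder hxcyl (by omega)⟩
      have hmove : h (prefixWord x M) ≠ prefixWord x M := by
        intro hc
        exact hxF (Finset.mem_filter.mpr ⟨hwext, hc⟩)
      have : act g x = act h x := by rw [hsplit, hPx]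
      exact act_moved hact (Rist_le_G hhR) hmove (this ▸ hxfix')
  -- measure bounds
  have hcount : μ (R j₀) = ((F M).card : ℝ≥0∞) * (dE⁻¹) ^ M :=
    measure_biUnion_cylinders μ hμ (hFlen M)
  have hR0 : μ (R 0) = ((F m).card : ℝ≥0∞) * (dE⁻¹) ^ m := by
    have := measure_biUnion_cylinders μ hμ (hFlen m)
    simpa [hR] using this
  have hcylu : μ (cylinder u) = ((extF u m).card : ℝ≥0∞) * (dE⁻¹) ^ m := by
    rw [cylinder_eq_biUnion u hm.le]
    exact measure_biUnion_cylinders μ hμ (fun w hw => (mem_extF.mp hw).1)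
  have hhalfμ : μ (R j₀) ≤ 2⁻¹ * μ (cylinder u) := by
    have h1 : μ (R j₀) ≤ μ (R 0) := measure_mono (hRanti (Nat.zero_le j₀))
    have h2 : 2 * μ (R 0) ≤ μ (cylinder u) := by
      rw [hR0, hcylu, ← mul_assoc]
      refine mul_le_mul_left ?_ _
      calc (2 : ℝ≥0∞) * ((F m).card : ℝ≥0∞) = ((2 * (F m).card : ℕ) : ℝ≥0∞) := by
            push_cast; ring
        _ ≤ ((extF u m).card : ℝ≥0∞) := by exact_mod_cast hhalf
    calc μ (R j₀) ≤ μ (R 0) := h1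
      _ = 2⁻¹ * (2 * μ (R 0)) := by
          rw [← mul_assoc, ENNReal.inv_mul_cancel two_ne_zero ENNReal.ofNat_ne_top, one_mul]
      _ ≤ 2⁻¹ * μ (cylinder u) := mul_le_mul_right h2 _
  have hmain : μ (fixedSet act g ∩ cylinder u)
      ≤ 2⁻¹ * (dE⁻¹) ^ L * (sstar μ act G + η) + η * (dE⁻¹) ^ L := by
    calc μ (fixedSet act g ∩ cylinder u)
        ≤ μ ((⋃ w ∈ F M, (fixedSet act (gs w) ∩ cylinder w)) ∪ (R j₀ \ fixedSet act h)) :=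
          measure_mono hincl
      _ ≤ μ (⋃ w ∈ F M, (fixedSet act (gs w) ∩ cylinder w)) + μ (R j₀ \ fixedSet act h) :=
          measure_union_le _ _
      _ ≤ (∑ w ∈ F M, μ (fixedSet act (gs w) ∩ cylinder w)) + η * (dE⁻¹) ^ L := by
          refine add_le_add (measure_biUnion_finset_le _ _) herr
      _ ≤ (∑ _w ∈ F M, (dE⁻¹) ^ M * (sstar μ act G + η)) + η * (dE⁻¹) ^ L := by
          refine add_le_add (Finset.sum_le_sum fun w hw => (hgsFix w hw).le) le_rfl
      _ = ((F M).card : ℝ≥0∞) * ((dE⁻¹) ^ M * (sstar μ act G + η)) + η * (dE⁻¹) ^ L := by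
          rw [Finset.sum_const, nsmul_eq_mul]
      _ = μ (R j₀) * (sstar μ act G + η) + η * (dE⁻¹) ^ L := by
          rw [hcount, mul_assoc]
      _ ≤ 2⁻¹ * μ (cylinder u) * (sstar μ act G + η) + η * (dE⁻¹) ^ L := by
          exact add_le_add (mul_le_mul_left hhalfμ _) le_rfl
      _ = 2⁻¹ * (dE⁻¹) ^ L * (sstar μ act G + η) + η * (dE⁻¹) ^ L := by
          rw [hμ u]
  have hfinal : inff μ act G u ≤ 2⁻¹ * (dE⁻¹) ^ L * (sstar μ act G + η) + η * (dE⁻¹) ^ L :=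
    le_trans (inff_le hμ hgR) hmain
  have hcancel : dE ^ L * (dE⁻¹) ^ L = 1 := pow_cancel hd L
  calc dE ^ L * inff μ act G u
      ≤ dE ^ L * (2⁻¹ * (dE⁻¹) ^ L * (sstar μ act G + η) + η * (dE⁻¹) ^ L) :=
        mul_le_mul_right hfinal _
    _ = 2⁻¹ * (sstar μ act G + η) * (dE ^ L * (dE⁻¹) ^ L)
        + η * (dE ^ L * (dE⁻¹) ^ L) := by ring
    _ = 2⁻¹ * (sstar μ act G + η) + η := by rw [hcancel, mul_one, mul_one]

theorem sstar_eq_zero : sstar μ act G = 0 := by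
  have hhalf : sstar μ act G ≤ 2⁻¹ * sstar μ act G := by
    refine ENNReal.le_of_forall_pos_le_add fun ε hε _ => ?_
    have hη : (0 : ℝ≥0∞) < (ε : ℝ≥0∞) / 2 :=
      ENNReal.div_pos (by exact_mod_cast hε.ne') ENNReal.ofNat_ne_top
    have hηt : (ε : ℝ≥0∞) / 2 ≠ ⊤ :=
      (ENNReal.div_lt_top ENNReal.coe_ne_top two_ne_zero).ne
    have hb : sstar μ act G ≤ 2⁻¹ * (sstar μ act G + (ε : ℝ≥0∞) / 2) + (ε : ℝ≥0∞) / 2 := by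
      refine iSup_le fun u => boost hd hG hWB hact hμ u hη hηt
    calc sstar μ act G ≤ 2⁻¹ * (sstar μ act G + (ε : ℝ≥0∞) / 2) + (ε : ℝ≥0∞) / 2 := hb
      _ = 2⁻¹ * sstar μ act G + (2⁻¹ * ((ε : ℝ≥0∞) / 2) + (ε : ℝ≥0∞) / 2) := by ring
      _ ≤ 2⁻¹ * sstar μ act G + ((ε : ℝ≥0∞) / 2 + (ε : ℝ≥0∞) / 2) := by
          refine add_le_add le_rfl (add_le_add ?_ le_rfl)
          exact mul_le_of_le_one_left zero_le (by
            simp [ENNReal.inv_le_one])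
      _ = 2⁻¹ * sstar μ act G + ε := by rw [ENNReal.add_halves]
  by_contra hne
  have hpos : 0 < sstar μ act G := lt_of_le_of_ne zero_le (Ne.symm hne)
  have htop : sstar μ act G ≠ ⊤ := ne_top_of_le_ne_top ENNReal.one_ne_top (sstar_le_one hμ hd)
  have : 2⁻¹ * sstar μ act G < sstar μ act G := by
    rw [← ENNReal.div_eq_inv_mul]
    exact ENNReal.half_lt_self hpos.ne' htop
  exact absurd hhalf (not_le.mpr this)

theorem exists_small_fixed (u : Word d) {ε : ℝ≥0∞} (hε : 0 < ε) :
    ∃ g ∈ ristSet G u, μ (fixedSet act g ∩ cylinder u) < ε := by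
  have hz : inff μ act G u = 0 := by
    have h1 : (d : ℝ≥0∞) ^ u.length * inff μ act G u ≤ sstar μ act G :=
      le_iSup (fun u : Word d => (d : ℝ≥0∞) ^ u.length * inff μ act G u) u
    rw [sstar_eq_zero hd hG hWB hact hμ, le_zero_iff, mul_eq_zero] at h1
    rcases h1 with h1 | h1
    · exact absurd h1 (pow_ne_zero _ (dE_ne_zero hd))
    · exact h1
  have : inff μ act G u < ε := hz ▸ hε
  rw [inff, iInf_lt_iff] at this
  obtain ⟨⟨g, hg⟩, hglt⟩ := this
  exact ⟨g, hg, hglt⟩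

end Core
end WB
namespace WB
open MeasureTheory
attribute [local instance 5] Classical.propDecidable
variable {d : ℕ}

theorem isOpen_cylinder (v : Word d) : IsOpen (_root_.cylinder v) := by
  have hset : _root_.cylinder v = ⋂ i : Fin v.length, (fun x : Boundary d => x i) ⁻¹' {v.get i} := by
    ext x
    simp only [Set.mem_iInter, Set.mem_preimage, Set.mem_singleton_iff]
    exact mem_cylinder_iff_coords
  rw [hset]
  exact isOpen_iInter_of_finite fun i =>
    (continuous_apply (i : ℕ)).isOpen_preimage _ (isOpen_discrete _)

theorem mem_cylinder_prefixWord_iff {x y : Boundary d} {n : ℕ} :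
    y ∈ _root_.cylinder (prefixWord x n) ↔ ∀ i, i < n → y i = x i := by
  rw [mem_cylinder, prefixWord_length]
  simp only [prefixWord]
  rw [List.ofFn_inj, funext_iff]
  constructor
  · intro h i hi
    exact h ⟨i, hi⟩
  · intro h i
    exact h i i.isLt

theorem exists_cylinder_subset {U : Set (Boundary d)} (hU : IsOpen U) {x : Boundary d}
    (hx : x ∈ U) : ∃ n, _root_.cylinder (prefixWord x n) ⊆ U := by
  have hnh : U ∈ nhds x := hU.mem_nhds hx
  rw [nhds_pi, Filter.mem_pi] at hnh
  obtain ⟨I, hIfin, t, ht, hsub⟩ := hnh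
  obtain ⟨N, hN⟩ := hIfin.bddAbove
  refine ⟨N + 1, fun y hy => hsub ?_⟩
  rw [Set.mem_pi]
  intro i hi
  have hle : i ≤ N := hN hi
  have hyi : y i = x i := mem_cylinder_prefixWord_iff.mp hy i (by omega)
  rw [hyi]
  exact mem_of_mem_nhds (ht i)

/-- Sandwich a compact set inside an open set by a finite union of same-level _root_.cylinders. -/
theorem compact_open_sandwich {C U : Set (Boundary d)} (hC : IsCompact C) (hU : IsOpen U)
    (hCU : C ⊆ U) : ∃ n : ℕ,
      C ⊆ (⋃ w ∈ (wordsOf d n).filter (fun w => _root_.cylinder w ⊆ U), _root_.cylinder w) ∧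
      (⋃ w ∈ (wordsOf d n).filter (fun w => _root_.cylinder w ⊆ U), _root_.cylinder w) ⊆ U := by
  classical
  set nf : Boundary d → ℕ := fun x =>
    if hx : x ∈ U then Classical.choose (exists_cylinder_subset hU hx) else 0 with hnf
  have hnf1 : ∀ x ∈ U, _root_.cylinder (prefixWord x (nf x)) ⊆ U := by
    intro x hx
    simp only [hnf, dif_pos hx]
    exact Classical.choose_spec (exists_cylinder_subset hU hx)
  obtain ⟨t, htC, hcov⟩ := hC.elim_nhds_subcover (fun x => _root_.cylinder (prefixWord x (nf x)))
    (fun x _ => (isOpen_cylinder _).mem_nhds (mem_cylinder_prefixWord x _))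
  refine ⟨t.sup nf, ?_, ?_⟩
  · intro y hy
    have hy2 := hcov hy
    simp only [Set.mem_iUnion, exists_prop] at hy2
    obtain ⟨x₀, hx₀t, hy0⟩ := hy2
    have hx₀U : x₀ ∈ U := hCU (htC x₀ hx₀t)
    have hsubcyl : _root_.cylinder (prefixWord y (t.sup nf)) ⊆ _root_.cylinder (prefixWord x₀ (nf x₀)) := by
      intro z hz
      rw [mem_cylinder_prefixWord_iff] at hz ⊢
      intro i hi
      have hle : nf x₀ ≤ t.sup nf := Finset.le_sup hx₀t
      rw [hz i (lt_of_lt_of_le hi hle)]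
      exact mem_cylinder_prefixWord_iff.mp hy0 i hi
    have hwmem : prefixWord y (t.sup nf) ∈ (wordsOf d (t.sup nf)).filter
        (fun w => _root_.cylinder w ⊆ U) :=
      Finset.mem_filter.mpr ⟨mem_wordsOf.mpr (prefixWord_length _ _),
        hsubcyl.trans (hnf1 x₀ hx₀U)⟩
    exact Set.mem_biUnion hwmem (mem_cylinder_prefixWord y _)
  · intro y hy
    simp only [Set.mem_iUnion, Finset.mem_filter, exists_prop] at hy
    obtain ⟨w, ⟨-, hwU⟩, hyw⟩ := hy
    exact hwU hyw

theorem clopen_eq_biUnion {A : Set (Boundary d)} (hA : IsClopen A) :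
    ∃ n : ℕ, A = ⋃ w ∈ (wordsOf d n).filter (fun w => _root_.cylinder w ⊆ A), _root_.cylinder w := by
  obtain ⟨n, h1, h2⟩ := compact_open_sandwich hA.isClosed.isCompact hA.isOpen subset_rfl
  exact ⟨n, le_antisymm h1 h2⟩

theorem isClopen_biUnion_cyl {S : Finset (Word d)} {n : ℕ} (hS : ∀ w ∈ S, w.length = n) :
    IsClopen (⋃ w ∈ S, _root_.cylinder w) := by
  classical
  constructor
  · rw [← isOpen_compl_iff]
    have hcompl : (⋃ w ∈ S, _root_.cylinder w)ᶜ
        = ⋃ w ∈ (wordsOf d n).filter (fun w => w ∉ S), _root_.cylinder w := by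
      ext x
      simp only [Set.mem_compl_iff, Set.mem_iUnion, Finset.mem_filter, exists_prop,
        mem_wordsOf, not_exists, not_and]
      constructor
      · intro hx
        refine ⟨prefixWord x n, ⟨prefixWord_length _ _, fun hmem => ?_⟩,
          mem_cylinder_prefixWord _ _⟩
        exact hx _ hmem (mem_cylinder_prefixWord _ _)
      · rintro ⟨w, ⟨hwl, hwS⟩, hxw⟩ w' hw' hxw'
        apply hwS
        have h1 : prefixWord x n = w := by rw [← hwl]; exact hxw
        have h2 : prefixWord x n = w' := by rw [← hS w' hw']; exact hxw'
        rwa [← h1, h2]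
    rw [hcompl]
    exact isOpen_biUnion fun w _ => isOpen_cylinder w
  · exact isOpen_biUnion fun w _ => isOpen_cylinder w

theorem approx_clopen (μ : Measure (Boundary d)) [IsProbabilityMeasure μ]
    {B : Set (Boundary d)} (hB : MeasurableSet B) {ε : ℝ≥0∞} (hε : 0 < ε) (hεt : ε ≠ ⊤) :
    ∃ A : Set (Boundary d), IsClopen A ∧ μ (A ∆ B) < ε := by
  classical
  have hε2 : ε / 2 ≠ 0 := (ENNReal.div_pos hε.ne' ENNReal.ofNat_ne_top).ne'
  obtain ⟨U, hBU, hUopen, -, hUB⟩ := hB.exists_isOpen_diff_lt (measure_ne_top μ B) hε2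
  obtain ⟨V, hBV, hVopen, -, hVB⟩ := hB.compl.exists_isOpen_diff_lt (measure_ne_top μ _) hε2
  set C := Vᶜ with hC
  have hCB : C ⊆ B := by
    rw [hC, Set.compl_subset_comm]
    exact hBV
  have hBC : μ (B \ C) < ε / 2 := by
    have heq : B \ C = V \ Bᶜ := by
      ext z
      simp only [hC, Set.mem_diff, Set.mem_compl_iff, not_not]
      tauto
    rw [heq]
    exact hVB
  obtain ⟨n, h1, h2⟩ := compact_open_sandwich (hVopen.isClosed_compl.isCompact) hUopen
    (hCB.trans hBU)
  set A := ⋃ w ∈ (wordsOf d n).filter (fun w => _root_.cylinder w ⊆ U), _root_.cylinder w with hAdef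
  refine ⟨A, isClopen_biUnion_cyl (fun w hw => mem_wordsOf.mp (Finset.mem_filter.mp hw).1), ?_⟩
  have hAB : μ (A \ B) ≤ μ (U \ B) := measure_mono (Set.diff_subset_diff_left h2)
  have hBA : μ (B \ A) ≤ μ (B \ C) := measure_mono (Set.diff_subset_diff_right h1)
  calc μ (A ∆ B) ≤ μ (A \ B) + μ (B \ A) := by
        rw [Set.symmDiff_def]
        exact measure_union_le _ _
    _ ≤ μ (U \ B) + μ (B \ C) := add_le_add hAB hBA
    _ < ε / 2 + ε / 2 := ENNReal.add_lt_add hUB hBC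
    _ = ε := ENNReal.add_halves ε

end WB

namespace WB
theorem clopen_eq_biUnion' {d : ℕ} {A : Set (Boundary d)} (hA : IsClopen A) :
    ∃ (n : ℕ) (S : Finset (Word d)), (∀ w ∈ S, w.length = n) ∧
      A = ⋃ w ∈ S, _root_.cylinder w := by
  classical
  obtain ⟨n, hAeq⟩ := clopen_eq_biUnion hA
  exact ⟨n, _, fun w hw => mem_wordsOf.mp (Finset.mem_filter.mp hw).1, hAeq⟩
end WB
/-- For a weakly branch group `G` on the `d`-regular rooted tree: every clopen subset `A` of the
boundary can be almost filled by the support of some `g ∈ G` contained in `A`; consequently the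
boundary action is absolutely non-free: every measurable set is approximated in measure by
fixed-point sets of elements of `G`. -/
theorem weaklyBranch_absolutelyNonFree
    {d : ℕ} (hd : 2 ≤ d) (G : Subgroup (Equiv.Perm (Word d)))
    (hG : ∀ g ∈ G, IsTreeAut g) (hWB : IsWeaklyBranch G)
    (act : Equiv.Perm (Word d) → Boundary d → Boundary d) (hact : IsBoundaryAction G act)
    (μ : Measure (Boundary d)) [IsProbabilityMeasure μ] (hμ : IsUniformBernoulli μ) :
    (∀ A : Set (Boundary d), IsClopen A → ∀ ε : ℝ≥0∞, 0 < ε →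
      ∃ g ∈ G, suppSet act g ⊆ A ∧ μ (A \ suppSet act g) < ε) ∧
    (∀ B : Set (Boundary d), MeasurableSet B → ∀ ε : ℝ≥0∞, 0 < ε →
      ∃ g ∈ G, μ (fixedSet act g ∆ B) < ε) := by
  classical
  have part1 : ∀ A : Set (Boundary d), IsClopen A → ∀ ε : ℝ≥0∞, 0 < ε →
      ∃ g ∈ G, suppSet act g ⊆ A ∧ μ (A \ suppSet act g) < ε := by
    intro A hA ε hε
    set ε₀ := min ε 1 with hε₀
    have hε₀pos : 0 < ε₀ := lt_min hε zero_lt_one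
    have hε₀top : ε₀ ≠ ⊤ := (lt_of_le_of_lt (min_le_right _ _) ENNReal.one_lt_top).ne
    obtain ⟨n, S, hSlen, hAeq⟩ := WB.clopen_eq_biUnion' hA
    set ε' := ε₀ / 2 / (S.card + 1) with hε'
    have hcards : ((S.card : ℝ≥0∞) + 1) ≠ 0 := by simp
    have hcardt : ((S.card : ℝ≥0∞) + 1) ≠ ⊤ :=
      ENNReal.add_ne_top.mpr ⟨ENNReal.natCast_ne_top _, ENNReal.one_ne_top⟩
    have hε'pos : 0 < ε' :=
      ENNReal.div_pos (ENNReal.div_pos hε₀pos.ne' ENNReal.ofNat_ne_top).ne' hcardt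
    have hsel : ∀ w ∈ S, ∃ g ∈ ristSet G w,
        μ (fixedSet act g ∩ cylinder w) < ε' :=
      fun w _ => WB.exists_small_fixed hd hG hWB hact hμ w hε'pos
    choose gsel hgsel1 hgsel2 using hsel
    set gs : Word d → Equiv.Perm (Word d) := fun w =>
      if hw : w ∈ S then gsel w hw else 1 with hgs
    have hgsR : ∀ w ∈ S, gs w ∈ WB.Rist G w := by
      intro w hw
      simp only [hgs, dif_pos hw]
      exact hgsel1 w hw
    have hgsFix : ∀ w ∈ S, μ (fixedSet act (gs w) ∩ cylinder w) < ε' := by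
      intro w hw
      simp only [hgs, dif_pos hw]
      exact hgsel2 w hw
    set P := S.noncommProd gs (WB.prod_comm_aux hG hSlen hgsR) with hP
    have hPG : P ∈ G := WB.prod_mem_G hG hSlen hgsR
    refine ⟨P, hPG, ?_, ?_⟩
    · intro x hx
      by_contra hxA
      apply hx
      refine WB.prod_act_fix hG hSlen hgsR hact fun w hw hxw => ?_
      exact hxA (hAeq ▸ Set.mem_biUnion hw hxw)
    · have hsub : A \ suppSet act P ⊆ ⋃ w ∈ S, (fixedSet act (gs w) ∩ cylinder w) := by
        rintro x ⟨hxA, hxs⟩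
        have hxfix : act P x = x := by
          by_contra hc
          exact hxs hc
        rw [hAeq] at hxA
        simp only [Set.mem_iUnion, exists_prop] at hxA
        obtain ⟨w, hwS, hxw⟩ := hxA
        have hPx := WB.prod_act_single hG hSlen hgsR hact hwS hxw
        refine Set.mem_biUnion hwS ⟨?_, hxw⟩
        show act (gs w) x = x
        rw [← hPx]
        exact hxfix
      calc μ (A \ suppSet act P)
          ≤ μ (⋃ w ∈ S, (fixedSet act (gs w) ∩ cylinder w)) := measure_mono hsub
        _ ≤ ∑ w ∈ S, μ (fixedSet act (gs w) ∩ cylinder w) :=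
            measure_biUnion_finset_le _ _
        _ ≤ ∑ _w ∈ S, ε' := Finset.sum_le_sum fun w hw => (hgsFix w hw).le
        _ = (S.card : ℝ≥0∞) * ε' := by rw [Finset.sum_const, nsmul_eq_mul]
        _ ≤ ((S.card : ℝ≥0∞) + 1) * ε' := mul_le_mul_left le_self_add _
        _ = ε₀ / 2 := by rw [hε']; exact ENNReal.mul_div_cancel hcards hcardt
        _ < ε₀ := ENNReal.half_lt_self hε₀pos.ne' hε₀top
        _ ≤ ε := min_le_left _ _
  refine ⟨part1, ?_⟩
  intro B hB ε hε
  set ε₀ := min ε 1 with hε₀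
  have hε₀pos : 0 < ε₀ := lt_min hε zero_lt_one
  have hε₀top : ε₀ ≠ ⊤ := (lt_of_le_of_lt (min_le_right _ _) ENNReal.one_lt_top).ne
  have hhalfpos : 0 < ε₀ / 2 := ENNReal.div_pos hε₀pos.ne' ENNReal.ofNat_ne_top
  have hhalftop : ε₀ / 2 ≠ ⊤ := (ENNReal.div_lt_top hε₀top two_ne_zero).ne
  obtain ⟨A, hAclopen, hAapprox⟩ := WB.approx_clopen μ hB.compl hhalfpos hhalftop
  obtain ⟨g, hgG, hsupp, hless⟩ := part1 A hAclopen (ε₀ / 2) hhalfpos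
  refine ⟨g, hgG, ?_⟩
  have hfixeq : fixedSet act g ∆ B = suppSet act g ∆ Bᶜ := by
    have h1 : fixedSet act g = (suppSet act g)ᶜ := by
      rw [WB.suppSet_eq_compl, compl_compl]
    rw [h1]
    conv_lhs => rw [← compl_compl B]
    exact compl_symmDiff_compl _ _
  have hsd : suppSet act g ∆ A = A \ suppSet act g := by
    rw [Set.symmDiff_def, Set.diff_eq_empty.mpr hsupp, Set.empty_union]
  calc μ (fixedSet act g ∆ B) = μ (suppSet act g ∆ Bᶜ) := by rw [hfixeq]
    _ ≤ μ ((suppSet act g ∆ A) ∪ (A ∆ Bᶜ)) :=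
        measure_mono (symmDiff_triangle _ A _)
    _ ≤ μ (suppSet act g ∆ A) + μ (A ∆ Bᶜ) := measure_union_le _ _
    _ = μ (A \ suppSet act g) + μ (A ∆ Bᶜ) := by rw [hsd]
    _ < ε₀ / 2 + ε₀ / 2 := ENNReal.add_lt_add hless hAapprox
    _ = ε₀ := ENNReal.add_halves ε₀
    _ ≤ ε := min_le_left _ _
end

section
/- Let d ≥ 2 and let G ≤ Aut(T_d) be a countable branch group acting on the boundary X = ∂T_d with the uniform Bernoulli measure μ. Let u be a finite word of length k and let m = [G : rist_G(k)] (which is finite since G is branch). If A ⊆ X_u is a measurable set with g•A = A for every g ∈ rist_G(u), then μ(A) = 0 or μ(A) ≥ 1/m. In particular, the action of rist_G(u) on X_u has at most m ergodic components. -/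
open MeasureTheory
open scoped symmDiff ENNReal Pointwise

namespace BranchAux

lemma prefixWord_length (x : Boundary d) (n : ℕ) : (prefixWord x n).length = n := by
  simp [prefixWord]

lemma prefixWord_getD (x : Boundary d) {n i : ℕ} (h : i < n) (a : Fin d) :
    (prefixWord x n).getD i a = x i := by
  rw [List.getD_eq_getElem _ _ (by simpa [prefixWord_length] using h)]
  simp [prefixWord]

lemma boundary_ext {x y : Boundary d} (h : ∀ n, prefixWord x n = prefixWord y n) : x = y := by
  funext i
  have h2 := congrArg (fun l => l.getD i (x i)) (h (i + 1))
  rwa [prefixWord_getD _ (Nat.lt_succ_self i), prefixWord_getD _ (Nat.lt_succ_self i)] at h2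

lemma prefixWord_prefix (x : Boundary d) {k n : ℕ} (h : k ≤ n) :
    prefixWord x k <+: prefixWord x n := by
  rw [List.prefix_iff_eq_take]
  apply List.ext_getElem
  · simp [prefixWord, h]
  · intro i h1 h2
    simp [prefixWord]

lemma cylinder_subset_of_prefix {v w : Word d} (h : v <+: w) : cylinder w ⊆ cylinder v := by
  intro x hx
  have hlen : v.length ≤ w.length := h.length_le
  have h1 : prefixWord x v.length <+: prefixWord x w.length := prefixWord_prefix x hlen
  rw [hx] at h1
  have h2 := List.prefix_iff_eq_take.mp h1
  have h3 := List.prefix_iff_eq_take.mp h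
  rw [prefixWord_length] at h2
  show prefixWord x v.length = v
  rw [h2]
  exact h3.symm

lemma mem_cylinder_ofFn {n : ℕ} {p : Fin n → Fin d} {x : Boundary d} :
    x ∈ cylinder (List.ofFn p) ↔ (fun j : Fin n => x j) = p := by
  have hl : (List.ofFn p).length = n := List.length_ofFn
  show prefixWord x (List.ofFn p).length = List.ofFn p ↔ _
  rw [hl]
  exact List.ofFn_inj

lemma self_mem_cylinder_prefixWord (x : Boundary d) (n : ℕ) :
    x ∈ cylinder (prefixWord x n) :=
  mem_cylinder_ofFn.mpr rfl


lemma measurableSet_cylinder (v : Word d) : MeasurableSet (cylinder v) := by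
  have h : cylinder v =
      (fun (x : Boundary d) (j : Fin v.length) => x j) ⁻¹' {p | List.ofFn p = v} := by
    ext x
    exact Iff.rfl
  rw [h]
  exact (measurable_pi_lambda _ fun j => measurable_pi_apply _) ((Set.to_countable _).measurableSet)

lemma generateFrom_cylinders :
    (inferInstance : MeasurableSpace (Boundary d)) =
      MeasurableSpace.generateFrom {s | ∃ v : Word d, s = cylinder v} := by
  apply le_antisymm
  · refine iSup_le fun i => ?_
    intro s hs
    obtain ⟨t, -, rfl⟩ := hs
    have key : ∀ a : Fin d, MeasurableSet[MeasurableSpace.generateFrom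
        {s | ∃ v : Word d, s = cylinder v}] {x : Boundary d | x i = a} := by
      intro a
      have he : {x : Boundary d | x i = a} =
          ⋃ p ∈ {p : Fin (i + 1) → Fin d | p ⟨i, Nat.lt_succ_self i⟩ = a},
            cylinder (List.ofFn p) := by
        ext x
        simp only [Set.mem_setOf_eq, Set.mem_iUnion]
        constructor
        · intro hx
          refine ⟨fun j : Fin (i + 1) => x j, hx, ?_⟩
          show prefixWord x (List.ofFn _).length = _
          rw [List.length_ofFn]
          rfl
        · rintro ⟨p, hp, hx⟩
          have : prefixWord x (List.ofFn p).length = List.ofFn p := hx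
          rw [List.length_ofFn] at this
          have h2 : (fun j : Fin (i + 1) => x j) = p := List.ofFn_inj.mp this
          rw [← hp, ← h2]
      rw [he]
      exact MeasurableSet.biUnion (Set.to_countable _)
        (fun p _ => MeasurableSpace.measurableSet_generateFrom ⟨List.ofFn p, rfl⟩)
    have ht : (fun x : Boundary d => x i) ⁻¹' t = ⋃ a ∈ t, {x : Boundary d | x i = a} := by
      ext x; simp
    rw [ht]
    exact MeasurableSet.biUnion (Set.to_countable _) fun a _ => key a
  · refine MeasurableSpace.generateFrom_le ?_
    rintro s ⟨v, rfl⟩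
    exact measurableSet_cylinder v


section act
variable {d : ℕ} {G : Subgroup (Equiv.Perm (Word d))}
  {act : Equiv.Perm (Word d) → Boundary d → Boundary d}

lemma isPiSystem_cylinders : IsPiSystem {s : Set (Boundary d) | ∃ v : Word d, s = cylinder v} := by
  rintro _ ⟨v, rfl⟩ _ ⟨w, rfl⟩ hne
  obtain ⟨x, hxv, hxw⟩ := hne
  rcases le_total v.length w.length with h | h
  · have hvw : v <+: w := by
      have h1 : prefixWord x v.length <+: prefixWord x w.length := prefixWord_prefix x h
      rw [hxv, hxw] at h1; exact h1
    have : cylinder v ∩ cylinder w = cylinder w :=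
      Set.inter_eq_self_of_subset_right (cylinder_subset_of_prefix hvw)
    rw [this]; exact ⟨w, rfl⟩
  · have hwv : w <+: v := by
      have h1 : prefixWord x w.length <+: prefixWord x v.length := prefixWord_prefix x h
      rw [hxv, hxw] at h1; exact h1
    have : cylinder v ∩ cylinder w = cylinder v :=
      Set.inter_eq_self_of_subset_left (cylinder_subset_of_prefix hwv)
    rw [this]; exact ⟨v, rfl⟩

section act
variable (hact : IsBoundaryAction G act)
include hact

lemma act_mul {g h : Equiv.Perm (Word d)} (hg : g ∈ G) (hh : h ∈ G) (x : Boundary d) :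
    act (g * h) x = act g (act h x) := by
  apply boundary_ext
  intro n
  rw [hact _ (mul_mem hg hh), hact _ hg, hact _ hh]
  rfl

lemma act_one (x : Boundary d) : act 1 x = x := by
  apply boundary_ext
  intro n
  rw [hact _ (one_mem G)]
  rfl

lemma act_inv_comp {g : Equiv.Perm (Word d)} (hg : g ∈ G) (x : Boundary d) :
    act g⁻¹ (act g x) = x := by
  rw [← act_mul hact (inv_mem hg) hg, inv_mul_cancel, act_one hact]

lemma act_comp_inv {g : Equiv.Perm (Word d)} (hg : g ∈ G) (x : Boundary d) :
    act g (act g⁻¹ x) = x := by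
  rw [← act_mul hact hg (inv_mem hg), mul_inv_cancel, act_one hact]

lemma act_image_eq_preimage {g : Equiv.Perm (Word d)} (hg : g ∈ G) (S : Set (Boundary d)) :
    act g '' S = act g⁻¹ ⁻¹' S := by
  ext y
  constructor
  · rintro ⟨x, hx, rfl⟩
    rwa [Set.mem_preimage, act_inv_comp hact hg]
  · intro hy
    exact ⟨act g⁻¹ y, hy, act_comp_inv hact hg y⟩

lemma act_preimage_cylinder (hG : ∀ g ∈ G, IsTreeAut g) {g : Equiv.Perm (Word d)} (hg : g ∈ G)
    (v : Word d) : act g ⁻¹' cylinder v = cylinder (g⁻¹ v) := by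
  ext x
  have hlen : (g⁻¹ v).length = v.length := (hG g⁻¹ (inv_mem hg)).1 v
  constructor
  · intro hx
    have h1 : prefixWord (act g x) v.length = v := hx
    rw [hact _ hg] at h1
    show prefixWord x (g⁻¹ v).length = g⁻¹ v
    rw [hlen]
    apply g.injective
    rw [h1, ← Equiv.Perm.mul_apply g g⁻¹ v, mul_inv_cancel, Equiv.Perm.one_apply]
  · intro hx
    have h1 : prefixWord x (g⁻¹ v).length = g⁻¹ v := hx
    rw [hlen] at h1
    show prefixWord (act g x) v.length = v
    rw [hact _ hg, h1, ← Equiv.Perm.mul_apply g g⁻¹ v, mul_inv_cancel, Equiv.Perm.one_apply]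

lemma measurable_act (hd : 0 < d) {g : Equiv.Perm (Word d)} (hg : g ∈ G) :
    Measurable (act g) := by
  rw [measurable_pi_iff]
  intro i
  have key : (fun x : Boundary d => act g x i) =
      (fun p : Fin (i + 1) → Fin d => (g (List.ofFn p)).getD i ⟨0, hd⟩) ∘
        (fun (x : Boundary d) (j : Fin (i + 1)) => x j) := by
    funext x
    show act g x i = (g (List.ofFn fun j : Fin (i + 1) => x j)).getD i ⟨0, hd⟩
    have h1 : (g : Equiv.Perm (Word d)) (List.ofFn fun j : Fin (i + 1) => x j) =
        prefixWord (act g x) (i + 1) := (hact _ hg x (i + 1)).symm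
    rw [h1, prefixWord_getD _ (Nat.lt_succ_self i)]
  rw [key]
  exact (measurable_of_countable _).comp
    (measurable_pi_lambda _ fun j => measurable_pi_apply _)

lemma map_act_eq (hd : 0 < d) (hG : ∀ g ∈ G, IsTreeAut g)
    (μ : Measure (Boundary d)) [IsProbabilityMeasure μ] (hμ : IsUniformBernoulli μ)
    {g : Equiv.Perm (Word d)} (hg : g ∈ G) :
    Measure.map (act g) μ = μ := by
  haveI : IsProbabilityMeasure (Measure.map (act g) μ) :=
    Measure.isProbabilityMeasure_map (measurable_act hact hd hg).aemeasurable
  refine ext_of_generate_finite _ generateFrom_cylinders isPiSystem_cylinders ?_ ?_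
  · rintro _ ⟨v, rfl⟩
    rw [Measure.map_apply (measurable_act hact hd hg) (measurableSet_cylinder v),
      act_preimage_cylinder hact hG hg v, hμ, hμ, (hG g⁻¹ (inv_mem hg)).1 v]
  · simp


end act

lemma ergodic_of_levelTransitive (hd : 0 < d) (hG : ∀ g ∈ G, IsTreeAut g)
    (hLT : LevelTransitive G) (hact : IsBoundaryAction G act)
    (μ : Measure (Boundary d)) [IsProbabilityMeasure μ] (hμ : IsUniformBernoulli μ)
    {B : Set (Boundary d)} (hBm : MeasurableSet B) (hBinv : ∀ g ∈ G, act g '' B = B) :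
    μ B = 0 ∨ μ B = 1 := by
  have hdd : (d : ℝ≥0∞) ≠ 0 := Nat.cast_ne_zero.mpr hd.ne'
  have hBpre : ∀ g ∈ G, act g ⁻¹' B = B := by
    intro g hg
    have h1 := act_image_eq_preimage hact (inv_mem hg) B
    rw [inv_inv] at h1
    rw [← h1]
    exact hBinv g⁻¹ (inv_mem hg)
  have hmapμ : ∀ g ∈ G, ∀ S : Set (Boundary d), MeasurableSet S → μ (act g ⁻¹' S) = μ S := by
    intro g hg S hS
    conv_rhs => rw [← map_act_eq hact hd hG μ hμ hg]
    rw [Measure.map_apply (measurable_act hact hd hg) hS]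
  have hconst : ∀ v w : Word d, v.length = w.length →
      μ (B ∩ cylinder v) = μ (B ∩ cylinder w) := by
    intro v w hlen
    obtain ⟨g, hg, hgw⟩ := hLT w v hlen.symm
    have h1 : act g ⁻¹' (B ∩ cylinder v) = B ∩ cylinder w := by
      rw [Set.preimage_inter, hBpre g hg, act_preimage_cylinder hact hG hg]
      have h2 : g⁻¹ v = w := by
        apply g.injective
        rw [← Equiv.Perm.mul_apply g g⁻¹ v, mul_inv_cancel, Equiv.Perm.one_apply, hgw]
      rw [h2]
    rw [← h1, hmapμ g hg _ (hBm.inter (measurableSet_cylinder v))]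
  have hprod : ∀ v : Word d, μ (B ∩ cylinder v) = μ B * μ (cylinder v) := by
    intro v
    set n := v.length with hn
    have hdisj : Pairwise (Function.onFun Disjoint
        fun p : Fin n → Fin d => B ∩ cylinder (List.ofFn p)) := by
      intro p q hpq
      refine Set.disjoint_left.mpr ?_
      rintro x ⟨-, hxp⟩ ⟨-, hxq⟩
      exact hpq ((mem_cylinder_ofFn.mp hxp).symm.trans (mem_cylinder_ofFn.mp hxq))
    have hsum : ∑ p : Fin n → Fin d, μ (B ∩ cylinder (List.ofFn p)) = μ B := by
      rw [← tsum_fintype (L := SummationFilter.unconditional _),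
        ← measure_iUnion hdisj (fun p => hBm.inter (measurableSet_cylinder _)),
        ← Set.inter_iUnion]
      have hpart : (⋃ p : Fin n → Fin d, cylinder (List.ofFn p)) = Set.univ := by
        ext x
        simp only [Set.mem_iUnion, Set.mem_univ, iff_true]
        exact ⟨fun j => x j, mem_cylinder_ofFn.mpr rfl⟩
      rw [hpart, Set.inter_univ]
    have hval : ∀ p : Fin n → Fin d,
        μ (B ∩ cylinder (List.ofFn p)) = μ (B ∩ cylinder v) :=
      fun p => hconst _ _ (by rw [List.length_ofFn, hn])
    rw [Finset.sum_congr rfl (fun p _ => hval p), Finset.sum_const, Finset.card_univ,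
      Fintype.card_fun, Fintype.card_fin, Fintype.card_fin, nsmul_eq_mul] at hsum
    push_cast at hsum
    rw [hμ v, ← hn, ← hsum, mul_comm ((d : ℝ≥0∞) ^ n * μ (B ∩ cylinder v)),
      ← mul_assoc, ← mul_pow, ENNReal.inv_mul_cancel hdd (ENNReal.natCast_ne_top d),
      one_pow, one_mul]
  have hall : ∀ ⦃E : Set (Boundary d)⦄, MeasurableSet E → μ (B ∩ E) = μ B * μ E := by
    refine MeasurableSpace.induction_on_inter generateFrom_cylinders isPiSystem_cylinders
      (by simp) ?_ ?_ ?_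
    · rintro _ ⟨v, rfl⟩
      exact hprod v
    · intro t ht hC
      have h1 : μ (B ∩ t) + μ (B ∩ tᶜ) = μ B := by
        rw [← Set.diff_eq]
        exact measure_inter_add_diff B ht
      have h2 : μ B * μ t + μ B * μ tᶜ = μ B := by
        rw [← mul_add, prob_add_prob_compl ht, mul_one]
      rw [hC] at h1
      have h3 : μ B * μ t + μ (B ∩ tᶜ) = μ B * μ t + μ B * μ tᶜ := h1.trans h2.symm
      exact (ENNReal.add_right_inj (ENNReal.mul_ne_top (measure_ne_top μ B)
        (measure_ne_top μ t))).mp h3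
    · intro f hfd hfm hC
      have hdisj' : Pairwise (Function.onFun Disjoint fun i => B ∩ f i) :=
        fun i j hij => (hfd hij).mono Set.inter_subset_right Set.inter_subset_right
      rw [Set.inter_iUnion, measure_iUnion hdisj' (fun i => hBm.inter (hfm i)),
        measure_iUnion hfd hfm, ← ENNReal.tsum_mul_left]
      exact tsum_congr hC
  have hBB := hall hBm
  rw [Set.inter_self] at hBB
  rcases eq_or_ne (μ B) 0 with h0 | h0
  · exact Or.inl h0
  · right
    have htop : μ B ≠ ⊤ := measure_ne_top μ B
    have h1 := congrArg (fun z => (μ B)⁻¹ * z) hBB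
    rw [ENNReal.inv_mul_cancel h0 htop, ← mul_assoc,
      ENNReal.inv_mul_cancel h0 htop, one_mul] at h1
    exact h1.symm

/-- An element of the rigid stabilizer of a word `v ≠ u` of the same length as `u` fixes the
cylinder of `u` pointwise. -/
lemma act_fixes_of_ristSet_ne (hact : IsBoundaryAction G act) {u v : Word d}
    (hlen : v.length = u.length) (hne : v ≠ u) {g : Equiv.Perm (Word d)}
    (hg : g ∈ ristSet G v) {x : Boundary d} (hx : x ∈ cylinder u) : act g x = x := by
  apply boundary_ext
  intro n
  rw [hact g hg.1 x n]
  apply hg.2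
  intro hpre
  apply hne
  have hn : v.length ≤ n := by
    have := hpre.length_le
    rwa [prefixWord_length] at this
  have hu : u <+: prefixWord x n := by
    have h1 : prefixWord x u.length <+: prefixWord x n :=
      prefixWord_prefix x (hlen ▸ hn)
    rwa [hx] at h1
  have e1 := List.prefix_iff_eq_take.mp hpre
  have e2 := List.prefix_iff_eq_take.mp hu
  rw [e1, e2, hlen]

end act

end BranchAux

open BranchAux in
/-- Let `G` be a countable branch group on the `d`-regular rooted tree, `u` a word, and
`m = [G : rist_G(|u|)]` the (finite) index of the level rigid stabilizer. Every measurable subset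
of the cylinder `X_u` invariant under the rigid stabilizer of `u` has measure `0` or at least
`1/m`. -/
theorem measure_invariant_subset_cylinder_of_branch
    {d : ℕ} (hd : 2 ≤ d) (G : Subgroup (Equiv.Perm (Word d)))
    (hG : ∀ g ∈ G, IsTreeAut g) (hGc : Countable G) (hB : IsBranch G)
    (act : Equiv.Perm (Word d) → Boundary d → Boundary d) (hact : IsBoundaryAction G act)
    (μ : Measure (Boundary d)) [IsProbabilityMeasure μ] (hμ : IsUniformBernoulli μ)
    (u : Word d) (m : ℕ) (hm : m = (ristLevel G u.length).relIndex G)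
    (A : Set (Boundary d)) (hA : MeasurableSet A) (hAu : A ⊆ cylinder u)
    (hinv : ∀ g ∈ ristSet G u, act g '' A = A) :
    μ A = 0 ∨ ((m : ℝ≥0∞))⁻¹ ≤ μ A := by
  by_cases hA0 : μ A = 0
  · exact Or.inl hA0
  right
  have hd0 : 0 < d := by omega
  set k := u.length with hk
  -- the level rigid stabilizer is contained in G
  have hHG : ristLevel G k ≤ G := by
    rw [ristLevel]
    refine (Subgroup.closure_le _).mpr ?_
    refine Set.iUnion₂_subset fun v hv => ?_
    intro g hg
    exact hg.1
  -- the level rigid stabilizer preserves A setwise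
  have hHA : ∀ h ∈ ristLevel G k, act h '' A = A := by
    intro h hh
    refine (Subgroup.closure_induction
      (p := fun g _ => g ∈ G ∧ act g '' A = A) ?_ ?_ ?_ ?_ hh).2
    · intro g hg
      simp only [Set.mem_iUnion, Set.mem_setOf_eq] at hg
      obtain ⟨v, hvlen, hgv⟩ := hg
      refine ⟨hgv.1, ?_⟩
      by_cases hvu : v = u
      · exact hinv g (hvu ▸ hgv)
      · have hfix : ∀ a ∈ A, act g a = a := fun a ha =>
          act_fixes_of_ristSet_ne hact hvlen hvu hgv (hAu ha)
        calc act g '' A = id '' A := Set.image_congr hfix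
          _ = A := Set.image_id A
    · exact ⟨one_mem G, by
        have : ∀ a ∈ A, act 1 a = a := fun a _ => act_one hact a
        calc act (1 : Equiv.Perm (Word d)) '' A = id '' A := Set.image_congr this
          _ = A := Set.image_id A⟩
    · rintro g h' - - ⟨hgG, hgA⟩ ⟨hhG, hhA⟩
      refine ⟨mul_mem hgG hhG, ?_⟩
      have hcomp : ∀ a, act (g * h') a = act g (act h' a) := act_mul hact hgG hhG
      calc act (g * h') '' A = (act g ∘ act h') '' A := Set.image_congr fun a _ => hcomp a
        _ = act g '' (act h' '' A) := Set.image_comp _ _ _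
        _ = A := by rw [hhA, hgA]
    · rintro g - ⟨hgG, hgA⟩
      refine ⟨inv_mem hgG, ?_⟩
      conv_lhs => rw [← hgA]
      calc act g⁻¹ '' (act g '' A) = (act g⁻¹ ∘ act g) '' A := (Set.image_comp _ _ _).symm
        _ = id '' A := Set.image_congr fun a _ => act_inv_comp hact hgG a
        _ = A := Set.image_id A
  -- the union of the G-translates of A
  set B : Set (Boundary d) := ⋃ g : G, act (g : Equiv.Perm (Word d)) '' A with hBdef
  have hBpieces : ∀ g : G, MeasurableSet (act (g : Equiv.Perm (Word d)) '' A) := by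
    intro g
    rw [act_image_eq_preimage hact g.2]
    exact (measurable_act hact hd0 (inv_mem g.2)) hA
  have hBm : MeasurableSet B := MeasurableSet.iUnion hBpieces
  have hmeasA : ∀ g : Equiv.Perm (Word d), g ∈ G → μ (act g '' A) = μ A := by
    intro g hg
    rw [act_image_eq_preimage hact hg]
    conv_rhs => rw [← map_act_eq hact hd0 hG μ hμ (inv_mem hg)]
    rw [Measure.map_apply (measurable_act hact hd0 (inv_mem hg)) hA]
  have hBinv : ∀ g ∈ G, act g '' B = B := by
    intro g hg
    rw [hBdef, Set.image_iUnion]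
    apply Set.Subset.antisymm
    · refine Set.iUnion_subset fun h => ?_
      have : act g '' (act (h : Equiv.Perm (Word d)) '' A)
          = act ((⟨g, hg⟩ * h : G) : Equiv.Perm (Word d)) '' A := by
        rw [← Set.image_comp]
        exact (Set.image_congr fun a _ => (act_mul hact hg h.2 a)).symm
      rw [this]
      exact Set.subset_iUnion (fun g' : G => act (g' : Equiv.Perm (Word d)) '' A) _
    · refine Set.iUnion_subset fun h => ?_
      have : act (h : Equiv.Perm (Word d)) '' A
          = act g '' (act ((⟨g, hg⟩⁻¹ * h : G) : Equiv.Perm (Word d)) '' A) := by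
        rw [← Set.image_comp]
        refine Set.image_congr fun a _ => ?_
        show act (↑h) a = act g (act (((⟨g, hg⟩⁻¹ * h : G) : Equiv.Perm (Word d))) a)
        rw [← act_mul hact hg ((⟨g, hg⟩⁻¹ * h : G)).2 a]
        congr 1
        simp only [Subgroup.coe_mul, InvMemClass.coe_inv]
        group
      rw [this]
      exact Set.subset_iUnion
        (fun h' : G => act g '' (act (h' : Equiv.Perm (Word d)) '' A)) _
  -- ergodicity gives μ B = 1
  have hAB : A ⊆ B := by
    have h1 : act ((1 : G) : Equiv.Perm (Word d)) '' A = A := by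
      have : ∀ a ∈ A, act 1 a = a := fun a _ => act_one hact a
      calc act (1 : Equiv.Perm (Word d)) '' A = id '' A := Set.image_congr this
        _ = A := Set.image_id A
    intro a ha
    refine Set.mem_iUnion.mpr ⟨1, ?_⟩
    rw [h1]
    exact ha
  have hB1 : μ B = 1 := by
    rcases ergodic_of_levelTransitive hd0 hG hB.1 hact μ hμ hBm hBinv with h | h
    · exact absurd (measure_mono_null hAB h) hA0
    · exact h
  -- cosets
  have hm0 : m ≠ 0 := hm ▸ hB.2 k
  set H' := (ristLevel G k).subgroupOf G with hH'
  have hcard : Nat.card (G ⧸ H') = m := by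
    rw [hm]
    rfl
  haveI hfin : Finite (G ⧸ H') := (Nat.card_ne_zero.mp (hcard ▸ hm0)).2
  cases nonempty_fintype (G ⧸ H')
  have hsub : B ⊆ ⋃ c : G ⧸ H',
      act ((Quotient.out c : G) : Equiv.Perm (Word d)) '' A := by
    rw [hBdef]
    refine Set.iUnion_subset fun g => ?_
    set c : G ⧸ H' := ↑g with hc
    set r : G := Quotient.out c with hr
    have hrel : r⁻¹ * g ∈ H' := by
      rw [← QuotientGroup.eq]
      rw [hr, QuotientGroup.out_eq']
    have hHmem : ((r⁻¹ * g : G) : Equiv.Perm (Word d)) ∈ ristLevel G k :=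
      Subgroup.mem_subgroupOf.mp hrel
    have heq : act ((g : G) : Equiv.Perm (Word d)) '' A
        = act ((r : G) : Equiv.Perm (Word d)) '' A := by
      have h1 : (g : G) = r * (r⁻¹ * g) := by group
      calc act ((g : G) : Equiv.Perm (Word d)) '' A
          = act ((r : Equiv.Perm (Word d)) * ((r⁻¹ * g : G) : Equiv.Perm (Word d))) '' A := by
            rw [← Subgroup.coe_mul, ← h1]
        _ = (act (r : Equiv.Perm (Word d)) ∘ act ((r⁻¹ * g : G) : Equiv.Perm (Word d))) '' A :=
            Set.image_congr fun a _ => act_mul hact r.2 (r⁻¹ * g).2 a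
        _ = act (r : Equiv.Perm (Word d)) '' (act ((r⁻¹ * g : G) : Equiv.Perm (Word d)) '' A) :=
            Set.image_comp _ _ _
        _ = act (r : Equiv.Perm (Word d)) '' A := by
            rw [hHA _ hHmem]
    rw [heq]
    exact Set.subset_iUnion
      (fun c : G ⧸ H' => act ((Quotient.out c : G) : Equiv.Perm (Word d)) '' A) c
  have hmain : 1 ≤ (m : ℝ≥0∞) * μ A := by
    calc (1 : ℝ≥0∞) = μ B := hB1.symm
      _ ≤ μ (⋃ c : G ⧸ H', act ((Quotient.out c : G) : Equiv.Perm (Word d)) '' A) :=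
          measure_mono hsub
      _ ≤ ∑ c : G ⧸ H', μ (act ((Quotient.out c : G) : Equiv.Perm (Word d)) '' A) :=
          measure_iUnion_fintype_le μ _
      _ = ∑ _c : G ⧸ H', μ A := by
          refine Finset.sum_congr rfl fun c _ => ?_
          exact hmeasA _ (Quotient.out c).2
      _ = (m : ℝ≥0∞) * μ A := by
          rw [Finset.sum_const, Finset.card_univ, nsmul_eq_mul,
            ← Nat.card_eq_fintype_card, hcard]
  calc ((m : ℝ≥0∞))⁻¹ = (m : ℝ≥0∞)⁻¹ * 1 := (mul_one _).symm
    _ ≤ (m : ℝ≥0∞)⁻¹ * ((m : ℝ≥0∞) * μ A) := mul_le_mul_right hmain _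
    _ = μ A := by
        rw [← mul_assoc, ENNReal.inv_mul_cancel (Nat.cast_ne_zero.mpr hm0)
          (ENNReal.natCast_ne_top m), one_mul]
end

section
/- Let d ≥ 2 and let G ≤ Aut(T_d) be a countable branch group. Then G admits infinitely many pairwise distinct indecomposable characters; that is, the set of indecomposable characters of G is infinite. -/
open MeasureTheory
open scoped symmDiff ENNReal Pointwise

open scoped ComplexOrder

/-- A character of a group `G`: a normalized, central, positive-definite function `G → ℂ`. -/
def IsCharacter (G : Type*) [Group G] (χ : G → ℂ) : Prop :=
  (∀ g h : G, χ (g * h) = χ (h * g)) ∧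
  (∀ (k : ℕ) (g : Fin k → G),
      (Matrix.of fun i j : Fin k => χ (g i * (g j)⁻¹)).PosSemidef) ∧
  χ 1 = 1

/-- A character is indecomposable if it is not a proper convex combination of two distinct
characters. -/
def IsIndecomposableCharacter (G : Type*) [Group G] (χ : G → ℂ) : Prop :=
  IsCharacter G χ ∧
  ¬ ∃ (t : ℝ) (χ₁ χ₂ : G → ℂ), 0 < t ∧ t < 1 ∧
      IsCharacter G χ₁ ∧ IsCharacter G χ₂ ∧ χ₁ ≠ χ₂ ∧
      ∀ g : G, χ g = (t : ℂ) * χ₁ g + ((1 : ℂ) - (t : ℂ)) * χ₂ g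


section CharAux

variable {G : Type*} [Group G] {χ : G → ℂ}

theorem char_herm (hχ : IsCharacter G χ) (x : G) : χ x⁻¹ = star (χ x) := by
  have h := (hχ.2.1 2 ![x, 1]).1
  have h2 := congrFun (congrFun h 1) 0
  simpa [Matrix.conjTranspose_apply, Matrix.of_apply] using h2.symm

theorem char_normSq_le_one (hχ : IsCharacter G χ) (x : G) : Complex.normSq (χ x) ≤ 1 := by
  set v : Fin 2 → ℂ := ![1, -star (χ x)] with hv
  have h := (hχ.2.1 2 ![x, 1]).dotProduct_mulVec_nonneg v
  have hval : dotProduct (star v)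
      ((Matrix.of fun i j : Fin 2 => χ (![x,1] i * (![x,1] j)⁻¹)).mulVec v)
      = 1 - (Complex.normSq (χ x) : ℂ) := by
    simp [hv, dotProduct, Matrix.mulVec, Fin.sum_univ_two, Matrix.of_apply,
      char_herm hχ x, hχ.2.2, Complex.mul_conj]
    ring_nf
  rw [hval] at h
  have := (Complex.le_def.mp h).1
  simpa using this

theorem char_abs_le_one (hχ : IsCharacter G χ) (x : G) : ‖χ x‖ ≤ 1 := by
  have := Real.sqrt_le_sqrt (char_normSq_le_one hχ x)
  simpa [Complex.norm_def, Real.sqrt_one] using this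
theorem char_coset (hχ : IsCharacter G χ) {n : G} (hn : χ n = 1) (x : G) :
    χ (x * n) = χ x := by
  have hn' : χ n⁻¹ = 1 := by rw [char_herm hχ n, hn]; simp
  set β : ℂ := χ x - χ (x * n) with hβ
  set v : Fin 3 → ℂ := ![-β, 1, -1] with hv
  have h := (hχ.2.1 3 ![x, 1, n⁻¹]).dotProduct_mulVec_nonneg v
  have hval : dotProduct (star v)
      ((Matrix.of fun i j : Fin 3 => χ (![x, 1, n⁻¹] i * (![x, 1, n⁻¹] j)⁻¹)).mulVec v)
      = -(Complex.normSq β : ℂ) := by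
    have h1 : χ (x * (n⁻¹)⁻¹) = χ (x * n) := by rw [inv_inv]
    have h2 : χ (1 * (n⁻¹)⁻¹) = 1 := by rw [one_mul, inv_inv, hn]
    have h3 : χ (n⁻¹ * 1⁻¹) = 1 := by rw [inv_one, mul_one, hn']
    have h4 : χ (n⁻¹ * x⁻¹) = star (χ (x * n)) := by
      rw [← mul_inv_rev, char_herm hχ]
    have h5 : χ (x⁻¹) = star (χ x) := char_herm hχ x
    simp [hv, dotProduct, Matrix.mulVec, Fin.sum_univ_three, Matrix.of_apply,
      hχ.2.2, h1, h2, h3, h4, h5, hn, hn']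
    have hns : -(Complex.normSq β : ℂ) = -(β * (starRingEnd ℂ) β) := by
      rw [Complex.mul_conj]
    rw [hns]
    simp only [hβ, map_sub]
    ring
  rw [hval] at h
  have h6 : Complex.normSq β ≤ 0 := by
    have := (Complex.le_def.mp h).1
    simpa using this
  have h7 : β = 0 := by
    have := Complex.normSq_eq_zero.mp (le_antisymm h6 (Complex.normSq_nonneg β))
    exact this
  have := sub_eq_zero.mp h7
  exact this.symm
theorem char_lift {N : Subgroup G} [N.Normal] {ψ : G ⧸ N → ℂ}
    (hψ : IsCharacter (G ⧸ N) ψ) : IsCharacter G (fun x => ψ (QuotientGroup.mk x)) := by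
  refine ⟨fun g h => by simpa using hψ.1 (QuotientGroup.mk g) (QuotientGroup.mk h), ?_, by
    simpa using hψ.2.2⟩
  intro k g
  exact hψ.2.1 k (fun i => QuotientGroup.mk (g i))

theorem char_desc {N : Subgroup G} [N.Normal] {φ : G → ℂ}
    (hφ : IsCharacter G φ) (hN : ∀ n ∈ N, φ n = 1) :
    ∃ ψ : G ⧸ N → ℂ, IsCharacter (G ⧸ N) ψ ∧ ∀ x : G, ψ (QuotientGroup.mk x) = φ x := by
  have hconst : ∀ a b : G, (QuotientGroup.mk a : G ⧸ N) = QuotientGroup.mk b → φ a = φ b := by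
    intro a b hab
    rw [QuotientGroup.eq] at hab
    have hb : b = a * (a⁻¹ * b) := by group
    rw [hb, char_coset hφ (hN _ hab)]
  set ψ : G ⧸ N → ℂ := fun q => φ q.out with hψdef
  have hmk : ∀ x : G, ψ (QuotientGroup.mk x) = φ x := by
    intro x
    exact hconst _ _ (QuotientGroup.out_eq' _)
  refine ⟨ψ, ⟨?_, ?_, ?_⟩, hmk⟩
  · intro q r
    induction q using Quotient.inductionOn'
    induction r using Quotient.inductionOn'
    rename_i a b
    show ψ (QuotientGroup.mk a * QuotientGroup.mk b) = ψ (QuotientGroup.mk b * QuotientGroup.mk a)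
    rw [← QuotientGroup.mk_mul, ← QuotientGroup.mk_mul, hmk, hmk]
    exact hφ.1 a b
  · intro k g
    have h := hφ.2.1 k (fun i => (g i).out)
    have heq : (Matrix.of fun i j : Fin k => ψ (g i * (g j)⁻¹))
        = Matrix.of fun i j : Fin k => φ ((g i).out * ((g j).out)⁻¹) := by
      ext i j
      simp only [Matrix.of_apply]
      have : g i * (g j)⁻¹ = QuotientGroup.mk ((g i).out * ((g j).out)⁻¹) := by
        rw [QuotientGroup.mk_mul, QuotientGroup.mk_inv, QuotientGroup.out_eq',
          QuotientGroup.out_eq']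
      rw [this, hmk]
    rw [heq]
    exact h
  · show ψ (QuotientGroup.mk 1) = 1
    rw [hmk]
    exact hφ.2.2
theorem myIsClosed_nonneg : IsClosed {z : ℂ | 0 ≤ z} := by
  have : {z : ℂ | 0 ≤ z} = Complex.re ⁻¹' Set.Ici 0 ∩ Complex.im ⁻¹' {0} := by
    ext z
    simp [Complex.nonneg_iff, eq_comm]
  rw [this]
  exact (isClosed_Ici.preimage Complex.continuous_re).inter
    (isClosed_singleton.preimage Complex.continuous_im)

theorem isClosed_charSet (Q : Type*) [Group Q] :
    IsClosed {χ : Q → ℂ | IsCharacter Q χ} := by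
  have hKeq : {χ : Q → ℂ | IsCharacter Q χ} =
      (⋂ (g : Q) (h : Q), {χ : Q → ℂ | χ (g * h) = χ (h * g)}) ∩
      ((⋂ (k : ℕ) (g : Fin k → Q),
        ((⋂ (i : Fin k) (j : Fin k),
            {χ : Q → ℂ | (starRingEnd ℂ) (χ (g j * (g i)⁻¹)) = χ (g i * (g j)⁻¹)}) ∩
          ⋂ (x : Fin k → ℂ),
            {χ : Q → ℂ |
              0 ≤ ∑ i, (starRingEnd ℂ) (x i) * ∑ j, χ (g i * (g j)⁻¹) * x j})) ∩
        {χ : Q → ℂ | χ 1 = 1}) := by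
    ext χ
    simp only [Set.mem_setOf_eq, Set.mem_inter_iff, Set.mem_iInter]
    constructor
    · rintro ⟨h1, h2, h3⟩
      refine ⟨h1, ⟨fun k g => ⟨fun i j => ?_, fun x => ?_⟩, h3⟩⟩
      · have := congrFun (congrFun (h2 k g).1 i) j
        simpa [Matrix.conjTranspose_apply, Matrix.of_apply, Complex.star_def] using this
      · have := (h2 k g).dotProduct_mulVec_nonneg x
        simpa [dotProduct, Matrix.mulVec, Matrix.of_apply, Complex.star_def] using this
    · rintro ⟨h1, ⟨h2, h3⟩⟩
      refine ⟨h1, fun k g => Matrix.PosSemidef.of_dotProduct_mulVec_nonneg ?_ fun x => ?_, h3⟩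
      · ext i j
        have := (h2 k g).1 i j
        simpa [Matrix.conjTranspose_apply, Matrix.of_apply, Complex.star_def] using this
      · have := (h2 k g).2 x
        simpa [dotProduct, Matrix.mulVec, Matrix.of_apply, Complex.star_def] using this
  rw [hKeq]
  refine IsClosed.inter ?_ (IsClosed.inter ?_ ?_)
  · exact isClosed_iInter fun g => isClosed_iInter fun h =>
      isClosed_eq (continuous_apply _) (continuous_apply _)
  · refine isClosed_iInter fun k => isClosed_iInter fun g => IsClosed.inter ?_ ?_
    · exact isClosed_iInter fun i => isClosed_iInter fun j =>
        isClosed_eq ((continuous_apply _).star) (continuous_apply _)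
    · refine isClosed_iInter fun x => ?_
      have hcont : Continuous fun χ : Q → ℂ =>
          ∑ i, (starRingEnd ℂ) (x i) * ∑ j, χ (g i * (g j)⁻¹) * x j := by
        refine continuous_finset_sum _ fun i _ => Continuous.mul continuous_const ?_
        exact continuous_finset_sum _ fun j _ => (continuous_apply _).mul continuous_const
      exact myIsClosed_nonneg.preimage hcont
  · exact isClosed_eq (continuous_apply _) continuous_const

theorem convex_charSet (Q : Type*) [Group Q] :
    Convex ℝ {χ : Q → ℂ | IsCharacter Q χ} := by
  rintro χ₁ h₁ χ₂ h₂ a b ha hb hab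
  refine ⟨fun g h => ?_, fun k g => Matrix.PosSemidef.of_dotProduct_mulVec_nonneg ?_ fun x => ?_, ?_⟩
  · simp only [Pi.add_apply, Pi.smul_apply, h₁.1 g h, h₂.1 g h]
  · ext i j
    simp only [Matrix.conjTranspose_apply, Matrix.of_apply, Pi.add_apply, Pi.smul_apply]
    have e₁ := congrFun (congrFun (h₁.2.1 k g).1 i) j
    have e₂ := congrFun (congrFun (h₂.2.1 k g).1 i) j
    simp only [Matrix.conjTranspose_apply, Matrix.of_apply] at e₁ e₂
    rw [star_add, star_smul, star_smul, e₁, e₂]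
    simp
  · have e₁ := (h₁.2.1 k g).dotProduct_mulVec_nonneg x
    have e₂ := (h₂.2.1 k g).dotProduct_mulVec_nonneg x
    have hsum : dotProduct (star x)
        ((Matrix.of fun i j : Fin k => (a • χ₁ + b • χ₂) (g i * (g j)⁻¹)).mulVec x)
        = (a : ℂ) * dotProduct (star x)
            ((Matrix.of fun i j : Fin k => χ₁ (g i * (g j)⁻¹)).mulVec x)
          + (b : ℂ) * dotProduct (star x)
            ((Matrix.of fun i j : Fin k => χ₂ (g i * (g j)⁻¹)).mulVec x) := by
      simp only [dotProduct, Matrix.mulVec, Matrix.of_apply, Pi.add_apply,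
        Pi.smul_apply, Complex.real_smul, Finset.mul_sum]
      rw [← Finset.sum_add_distrib]
      refine Finset.sum_congr rfl fun i _ => ?_
      rw [← Finset.sum_add_distrib]
      refine Finset.sum_congr rfl fun j _ => by ring
    rw [hsum]
    have ha' : (0 : ℂ) ≤ (a : ℂ) := by exact_mod_cast Complex.zero_le_real.mpr ha
    have hb' : (0 : ℂ) ≤ (b : ℂ) := by exact_mod_cast Complex.zero_le_real.mpr hb
    exact add_nonneg (mul_nonneg ha' e₁) (mul_nonneg hb' e₂)
  · simp only [Pi.add_apply, Pi.smul_apply, h₁.2.2, h₂.2.2, Complex.real_smul, mul_one]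
    exact_mod_cast congrArg (Complex.ofReal) hab
theorem delta_char (Q : Type*) [Group Q] [Fintype Q] [DecidableEq Q] :
    IsCharacter Q (fun x => if x = 1 then (1 : ℂ) else 0) := by
  refine ⟨fun g h => ?_, fun k g => ?_, by simp⟩
  · have : g * h = 1 ↔ h * g = 1 := by
      constructor <;> intro h' 
      · rw [mul_eq_one_iff_eq_inv] at h' ⊢; rw [h']; simp
      · rw [mul_eq_one_iff_eq_inv] at h' ⊢; rw [h']; simp
    simp only [this]
  · set A : Matrix Q (Fin k) ℂ := Matrix.of fun q i => if g i = q then 1 else 0 with hA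
    have hM : (Matrix.of fun i j : Fin k =>
        (fun x => if x = 1 then (1 : ℂ) else 0) (g i * (g j)⁻¹)) = A.conjTranspose * A := by
      ext i j
      simp only [Matrix.of_apply, Matrix.mul_apply, Matrix.conjTranspose_apply, hA]
      rw [Finset.sum_eq_single (g i)]
      · by_cases h : g i = g j <;> simp [mul_inv_eq_one, h, eq_comm]
      · intro b _ hb
        simp [Ne.symm hb]
      · simp
    rw [hM]
    exact Matrix.posSemidef_conjTranspose_mul_self A
theorem exists_extreme_sep (Q : Type*) [Group Q] [Finite Q] {q : Q} (hq : q ≠ 1) :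
    ∃ χ : Q → ℂ, χ ∈ ({χ : Q → ℂ | IsCharacter Q χ}).extremePoints ℝ ∧ χ q ≠ 1 := by
  classical
  letI : Fintype Q := Fintype.ofFinite Q
  set K := {χ : Q → ℂ | IsCharacter Q χ} with hKdef
  have hKc : Convex ℝ K := convex_charSet Q
  have hKcl : IsClosed K := isClosed_charSet Q
  have hKb : Bornology.IsBounded K := by
    refine (Metric.isBounded_closedBall (x := (0 : Q → ℂ)) (r := 1)).subset ?_
    intro χ hχ
    rw [Metric.mem_closedBall, dist_zero_right]
    refine (pi_norm_le_iff_of_nonneg zero_le_one).mpr fun g => ?_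
    simpa using char_abs_le_one hχ g
  have hK : IsCompact K := Metric.isCompact_of_isClosed_isBounded hKcl hKb
  have hKM := closure_convexHull_extremePoints hK hKc
  by_contra hcon
  push_neg at hcon
  have hsub : K.extremePoints ℝ ⊆ {f : Q → ℂ | f q = 1} := fun χ hχ => hcon χ hχ
  have hCconv : Convex ℝ {f : Q → ℂ | f q = 1} := by
    intro f hf g hg a b ha hb hab
    simp only [Set.mem_setOf_eq] at hf hg ⊢
    simp only [Pi.add_apply, Pi.smul_apply, hf, hg, Complex.real_smul, mul_one]
    exact_mod_cast congrArg Complex.ofReal hab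
  have hCcl : IsClosed {f : Q → ℂ | f q = 1} :=
    isClosed_eq (continuous_apply q) continuous_const
  have hKsub : K ⊆ {f : Q → ℂ | f q = 1} := by
    rw [← hKM]
    exact closure_minimal (convexHull_min hsub hCconv) hCcl
  have hδ : (fun x : Q => if x = 1 then (1 : ℂ) else 0) ∈ K := delta_char Q
  have := hKsub hδ
  simp only [Set.mem_setOf_eq, if_neg hq] at this
  exact zero_ne_one this
theorem combo_eq_one {t : ℝ} (h0 : 0 < t) (h1 : t < 1) {z₁ z₂ : ℂ}
    (hz₁ : Complex.normSq z₁ ≤ 1) (hz₂ : Complex.normSq z₂ ≤ 1)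
    (h : (t : ℂ) * z₁ + ((1 : ℂ) - (t : ℂ)) * z₂ = 1) : z₁ = 1 ∧ z₂ = 1 := by
  have hre := congrArg Complex.re h
  have him := congrArg Complex.im h
  simp [Complex.add_re, Complex.mul_re, Complex.mul_im, Complex.sub_re, Complex.sub_im] at hre him
  rw [Complex.normSq_apply] at hz₁ hz₂
  have hr1 : z₁.re ≤ 1 := by nlinarith [sq_nonneg z₁.im, sq_nonneg z₁.re, sq_nonneg (z₁.re - 1), sq_nonneg (z₁.re + 1)]
  have hr2 : z₂.re ≤ 1 := by nlinarith [sq_nonneg z₂.im, sq_nonneg (z₂.re - 1), sq_nonneg (z₂.re + 1)]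
  have he1 : z₁.re = 1 := by nlinarith
  have he2 : z₂.re = 1 := by nlinarith
  have hi1 : z₁.im = 0 := by nlinarith [sq_nonneg z₁.im]
  have hi2 : z₂.im = 0 := by nlinarith [sq_nonneg z₂.im]
  constructor <;> apply Complex.ext <;> simp [he1, he2, hi1, hi2]

theorem lift_indec {G : Type*} [Group G] (N : Subgroup G) [N.Normal] [Finite (G ⧸ N)]
    {χ : G ⧸ N → ℂ}
    (hχ : χ ∈ ({ψ : G ⧸ N → ℂ | IsCharacter (G ⧸ N) ψ}).extremePoints ℝ) :
    IsIndecomposableCharacter G (fun x => χ (QuotientGroup.mk x)) := by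
  have hchar : IsCharacter G (fun x => χ (QuotientGroup.mk x)) := char_lift hχ.1
  refine ⟨hchar, ?_⟩
  rintro ⟨t, φ₁, φ₂, ht0, ht1, hc1, hc2, hne, heq⟩
  have hNfix : ∀ n ∈ N, φ₁ n = 1 ∧ φ₂ n = 1 := by
    intro n hn
    have h1 : (QuotientGroup.mk n : G ⧸ N) = 1 := (QuotientGroup.eq_one_iff n).mpr hn
    have h2 := heq n
    simp only [h1, hχ.1.2.2] at h2
    exact combo_eq_one ht0 ht1 (char_normSq_le_one hc1 n) (char_normSq_le_one hc2 n) h2.symm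
  obtain ⟨ψ₁, hψ₁, hm₁⟩ := char_desc hc1 (fun n hn => (hNfix n hn).1)
  obtain ⟨ψ₂, hψ₂, hm₂⟩ := char_desc hc2 (fun n hn => (hNfix n hn).2)
  have hseg : χ ∈ openSegment ℝ ψ₁ ψ₂ := by
    refine ⟨t, 1 - t, ht0, by linarith, by ring, ?_⟩
    funext q
    induction q using Quotient.inductionOn'
    rename_i x
    show t • ψ₁ (QuotientGroup.mk x) + (1 - t) • ψ₂ (QuotientGroup.mk x)
      = χ (QuotientGroup.mk x)
    rw [hm₁, hm₂, show χ (QuotientGroup.mk x : G ⧸ N) = (t : ℂ) * φ₁ x + ((1 : ℂ) - (t : ℂ)) * φ₂ x from heq x,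
      Complex.real_smul, Complex.real_smul]
    push_cast
    ring
  have hext := (mem_extremePoints.mp hχ).2 _ (show ψ₁ ∈ {ψ : G ⧸ N → ℂ | IsCharacter (G ⧸ N) ψ} from hψ₁) _
    (show ψ₂ ∈ {ψ : G ⧸ N → ℂ | IsCharacter (G ⧸ N) ψ} from hψ₂) hseg
  apply hne
  funext x
  rw [← hm₁, ← hm₂, hext.1, hext.2]

theorem exists_indec_sep {G : Type*} [Group G] (N : Subgroup G) [N.Normal] [Finite (G ⧸ N)]
    {g : G} (hg : g ∉ N) :
    ∃ χ : G → ℂ, IsIndecomposableCharacter G χ ∧ (∀ n ∈ N, χ n = 1) ∧ χ g ≠ 1 := by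
  have hq : (QuotientGroup.mk g : G ⧸ N) ≠ 1 := fun h => hg ((QuotientGroup.eq_one_iff g).mp h)
  obtain ⟨χ, hext, hne⟩ := exists_extreme_sep (G ⧸ N) hq
  refine ⟨fun x => χ (QuotientGroup.mk x), lift_indec N hext, fun n hn => ?_, hne⟩
  show χ (QuotientGroup.mk n) = 1
  rw [show (QuotientGroup.mk n : G ⧸ N) = 1 from (QuotientGroup.eq_one_iff n).mpr hn]
  exact hext.1.2.2

end CharAux

section TreeAux

variable {d : ℕ}

theorem conj_mem_ristSet {G : Subgroup (Equiv.Perm (Word d))} (hG : ∀ g ∈ G, IsTreeAut g)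
    {h p : Equiv.Perm (Word d)} (hh : h ∈ G) {v : Word d} (hp : p ∈ ristSet G v) :
    h * p * h⁻¹ ∈ ristSet G (h v) := by
  refine ⟨G.mul_mem (G.mul_mem hh hp.1) (G.inv_mem hh), fun w hw => ?_⟩
  have hnp : ¬ v <+: h⁻¹ w := by
    intro hc
    have h2 := ((hG h hh).2 v (h⁻¹ w)).mp hc
    rw [show h (h⁻¹ w) = w from h.apply_symm_apply w] at h2
    exact hw h2
  have h3 := hp.2 (h⁻¹ w) hnp
  rw [Equiv.Perm.mul_apply, Equiv.Perm.mul_apply, h3]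
  exact h.apply_symm_apply w

theorem ristLevel_conj {G : Subgroup (Equiv.Perm (Word d))} (hG : ∀ g ∈ G, IsTreeAut g)
    {k : ℕ} {h : Equiv.Perm (Word d)} (hh : h ∈ G) {p : Equiv.Perm (Word d)}
    (hp : p ∈ ristLevel G k) : h * p * h⁻¹ ∈ ristLevel G k := by
  have hmap : (ristLevel G k).map (MulAut.conj h).toMonoidHom ≤ ristLevel G k := by
    rw [ristLevel, MonoidHom.map_closure]
    apply Subgroup.closure_mono
    rintro q ⟨p', hp', rfl⟩
    simp only [Set.mem_iUnion, Set.mem_setOf_eq] at hp' ⊢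
    obtain ⟨v, hv, hpv⟩ := hp'
    refine ⟨h v, by rw [(hG h hh).1 v]; exact hv, ?_⟩
    simpa [MulAut.conj_apply] using conj_mem_ristSet hG hh hpv
  exact hmap ⟨p, hp, rfl⟩

theorem ristLevel_fixes {G : Subgroup (Equiv.Perm (Word d))} (hG : ∀ g ∈ G, IsTreeAut g)
    {k : ℕ} {p : Equiv.Perm (Word d)} (hp : p ∈ ristLevel G k) :
    ∀ u : Word d, u.length = k → p u = u := by
  let Stab : Subgroup (Equiv.Perm (Word d)) :=
    { carrier := {q : Equiv.Perm (Word d) | ∀ u : Word d, u.length = k → q u = u}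
      one_mem' := fun _ _ => rfl
      mul_mem' := by
        intro a b ha hb u hu
        simp only [Set.mem_setOf_eq] at ha hb
        simp [Equiv.Perm.mul_apply, hb u hu, ha u hu]
      inv_mem' := by
        intro a ha u hu
        simp only [Set.mem_setOf_eq] at ha
        conv_lhs => rw [← ha u hu]
        exact a.symm_apply_apply u }
  suffices hs : ristLevel G k ≤ Stab from hs hp
  refine (Subgroup.closure_le _).mpr ?_
  rintro q hq
  simp only [Set.mem_iUnion, Set.mem_setOf_eq] at hq
  obtain ⟨v, hv, hqv⟩ := hq
  intro u hu
  by_cases huv : u = v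
  · subst huv
    by_contra hne
    have hlen : (q u).length = u.length := (hG q hqv.1).1 u
    have hnp : ¬ u <+: q u := by
      intro hc
      exact hne (hc.eq_of_length hlen.symm).symm
    have h2 := hqv.2 (q u) hnp
    exact hne (q.injective h2)
  · have hnp : ¬ v <+: u := by
      intro hc
      exact huv (hc.eq_of_length (by rw [hv, hu])).symm
    exact hqv.2 u hnp

theorem ristLevel_antitone {G : Subgroup (Equiv.Perm (Word d))} {k l : ℕ} (hkl : k ≤ l) :
    ristLevel G l ≤ ristLevel G k := by
  refine (Subgroup.closure_le _).mpr ?_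
  rintro q hq
  simp only [Set.mem_iUnion, Set.mem_setOf_eq] at hq
  obtain ⟨v, hv, hqv⟩ := hq
  apply Subgroup.subset_closure
  simp only [Set.mem_iUnion, Set.mem_setOf_eq]
  refine ⟨v.take k, by rw [List.length_take, hv]; omega, hqv.1, fun w hw => hqv.2 w ?_⟩
  intro hc
  exact hw ((List.take_prefix k v).trans hc)

theorem G_infinite (hd : 2 ≤ d) {G : Subgroup (Equiv.Perm (Word d))}
    (hG : ∀ g ∈ G, IsTreeAut g) (hlt : LevelTransitive G) : Infinite ↥G := by
  by_contra hfin
  rw [not_infinite_iff_finite] at hfin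
  set c := Nat.card ↥G with hc
  have hcard : ∀ n : ℕ, d ^ n ≤ c := by
    intro n
    set base : Word d := List.replicate n ⟨0, by omega⟩ with hbdef
    have hbase : base.length = n := List.length_replicate
    set f : ↥G → {w : Word d // w.length = n} :=
      fun g => ⟨g.1 base, by rw [(hG g.1 g.2).1, hbase]⟩ with hfdef
    have hsurj : Function.Surjective f := by
      rintro ⟨w, hw⟩
      obtain ⟨g, hg, hgw⟩ := hlt base w (by rw [hbase, hw])
      exact ⟨⟨g, hg⟩, Subtype.ext hgw⟩
    have h1 : Nat.card {w : Word d // w.length = n} ≤ c :=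
      Nat.card_le_card_of_surjective f hsurj
    have h2 : Nat.card {w : Word d // w.length = n} = d ^ n := by
      have e : {w : Word d // w.length = n} ≃ (Fin n → Fin d) := Equiv.vectorEquivFin (Fin d) n
      rw [Nat.card_congr e]
      simp [Nat.card_eq_fintype_card]
    omega
  have h3 := hcard (c + 1)
  have h4 : 2 ^ (c + 1) ≤ d ^ (c + 1) := Nat.pow_le_pow_left hd _
  have h5 : c + 1 < 2 ^ (c + 1) := Nat.lt_two_pow_self
  omega

end TreeAux

/-- Every countable branch group on the `d`-regular rooted tree admits infinitely many pairwise
distinct indecomposable characters. -/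
theorem branch_infinitely_many_indecomposable_characters
    {d : ℕ} (hd : 2 ≤ d) (G : Subgroup (Equiv.Perm (Word d)))
    (hG : ∀ g ∈ G, IsTreeAut g) (hGc : Countable G) (hB : IsBranch G) :
    {χ : G → ℂ | IsIndecomposableCharacter G χ}.Infinite := by
  classical
  by_contra hfin
  rw [Set.not_infinite] at hfin
  set N : ℕ → Subgroup ↥G := fun k => (ristLevel G k).subgroupOf G with hNdef
  have hnorm : ∀ k, (N k).Normal := by
    intro k
    constructor
    intro x hx h
    rw [hNdef, Subgroup.mem_subgroupOf] at hx ⊢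
    simpa using ristLevel_conj hG h.2 hx
  have hfinQ : ∀ k, Finite (↥G ⧸ N k) := by
    intro k
    have hidx := hB.2 k
    exact Nat.finite_of_card_ne_zero hidx
  haveI hInf : Infinite ↥G := G_infinite hd hG hB.1
  set S := {χ : ↥G → ℂ | IsIndecomposableCharacter ↥G χ} with hSdef
  set f : (↥G → ℂ) → ℕ :=
    fun χ => if h : ∃ k, ∀ n ∈ N k, χ n = 1 then h.choose else 0 with hfdef
  set K := hfin.toFinset.sup f with hKdef
  have hK : ∀ χ ∈ S, (∃ k, ∀ n ∈ N k, χ n = 1) → ∀ n ∈ N K, χ n = 1 := by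
    intro χ hχ hex n hn
    have h1 : ∀ n ∈ N (f χ), χ n = 1 := by
      rw [hfdef]
      simp only [dif_pos hex]
      exact hex.choose_spec
    apply h1
    have hle : f χ ≤ K := Finset.le_sup (hfin.mem_toFinset.mpr hχ)
    rw [hNdef, Subgroup.mem_subgroupOf] at hn ⊢
    exact ristLevel_antitone hle hn
  have hNK : ∃ g0 : ↥G, g0 ∈ N K ∧ g0 ≠ 1 := by
    by_contra hcon
    push_neg at hcon
    have hbot : N K = ⊥ := (Subgroup.eq_bot_iff_forall _).mpr hcon
    have hidx := hB.2 K
    rw [show (ristLevel G K).relIndex G = (N K).index from rfl, hbot,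
      Subgroup.index_bot] at hidx
    exact hidx Nat.card_eq_zero_of_infinite
  obtain ⟨g0, hg0N, hg0⟩ := hNK
  have hmove : ∃ w : Word d, g0.1 w ≠ w := by
    by_contra hcon
    push_neg at hcon
    exact hg0 (Subtype.ext (Equiv.ext fun w => hcon w))
  obtain ⟨w, hw⟩ := hmove
  have hg0not : g0 ∉ N w.length := by
    intro hmem
    rw [hNdef, Subgroup.mem_subgroupOf] at hmem
    exact hw (ristLevel_fixes hG hmem w rfl)
  haveI := hnorm w.length
  haveI := hfinQ w.length
  obtain ⟨χ, hind, hNfix, hχg⟩ := exists_indec_sep (N w.length) hg0not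
  have hχS : χ ∈ S := hind
  exact hχg (hK χ hχS ⟨w.length, hNfix⟩ g0 hg0N)
end

section
/- There exist a countable weakly branch group G ≤ Aut(T_2) (acting on the binary rooted tree) and an n ∈ ℕ such that the diagonal action of G on (X^n, μ^n), where X = ∂T_2 and μ is the uniform Bernoulli measure, has no ergodic component of positive measure; that is, there is no measurable set Y ⊆ X^n with μ^n(Y) > 0 that is invariant under the diagonal action of G and such that every measurable Z ⊆ Y invariant under the diagonal action satisfies μ^n(Z) = 0 or μ^n(Y \ Z) = 0. -/
open MeasureTheory
open scoped symmDiff ENNReal Pointwise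

/-- The diagonal action of a tree automorphism on `Xⁿ`. -/
def diagAct {d : ℕ} (act : Equiv.Perm (Word d) → Boundary d → Boundary d)
    (n : ℕ) (g : Equiv.Perm (Word d)) : (Fin n → Boundary d) → (Fin n → Boundary d) :=
  fun x i => act g (x i)

namespace ErgAux

abbrev W := Word 2

def flipFn (m : ℕ) (c : W → Bool) : W → W :=
  fun w => if h : m < w.length ∧ c (w.take m) = true then w.set m (w[m]'h.1 + 1) else w

lemma length_flipFn (m : ℕ) (c : W → Bool) (w : W) : (flipFn m c w).length = w.length := by
  unfold flipFn; split <;> simp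

lemma set_getElem_self {α} (l : List α) {n : ℕ} (h : n < l.length) : l.set n l[n] = l := by
  apply List.ext_getElem
  · simp
  · intro i h1 h2
    rcases eq_or_ne n i with rfl | hne
    · exact List.getElem_set_self _
    · exact List.getElem_set_ne hne _

lemma take_set_of_le {α} (l : List α) {n m : ℕ} (a : α) (h : n ≤ m) :
    (l.set m a).take n = l.take n := by
  apply List.ext_getElem
  · simp
  · intro i h1 h2
    simp only [List.length_take, List.length_set, lt_min_iff] at h1
    simp only [List.getElem_take]
    exact List.getElem_set_ne (by omega) _

lemma flipFn_invol (m : ℕ) (c : W → Bool) : Function.Involutive (flipFn m c) := by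
  intro w
  unfold flipFn
  split
  · rename_i h
    have h1 : m < (w.set m (w[m]'h.1 + 1)).length := by simpa using h.1
    rw [dif_pos ⟨h1, by rw [take_set_of_le _ _ le_rfl]; exact h.2⟩]
    rw [List.getElem_set_self h1, List.set_set]
    have he : w[m]'h.1 + 1 + 1 = w[m]'h.1 := by
      generalize w[m]'h.1 = b; revert b; decide
    rw [he, set_getElem_self _ h.1]
  · rename_i h
    rfl

lemma flipFn_of_le {m : ℕ} {c : W → Bool} {w : W} (h : w.length ≤ m) : flipFn m c w = w := by
  unfold flipFn; rw [dif_neg]; rintro ⟨h1, -⟩; omega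

lemma flipFn_append_of_lt {m : ℕ} {c : W → Bool} {v : W} (h : m < v.length) (t : W) :
    flipFn m c (v ++ t) = flipFn m c v ++ t := by
  unfold flipFn
  have htake : (v ++ t).take m = v.take m := List.take_append_of_le_length h.le
  by_cases hc : c (v.take m) = true
  · rw [dif_pos ⟨by simp; omega, by rw [htake]; exact hc⟩, dif_pos ⟨h, hc⟩]
    have hget : (v ++ t)[m]'(by simp; omega) = v[m]'h := List.getElem_append_left h
    rw [hget, List.set_append, if_pos h]
  · rw [dif_neg (by rw [htake]; tauto), dif_neg (by tauto)]

lemma flipFn_concat_eq {m : ℕ} {c : W → Bool} {p : W} (hp : p.length = m) (s : Fin 2) :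
    flipFn m c (p ++ [s]) = p ++ [if c p then s + 1 else s] := by
  subst hp
  unfold flipFn
  have hlen : p.length < (p ++ [s]).length := by simp
  have htake : (p ++ [s]).take p.length = p := List.take_left
  by_cases hc : c p = true
  · rw [dif_pos ⟨hlen, by rw [htake]; exact hc⟩]
    have hget : (p ++ [s])[p.length]'hlen = s := by
      rw [List.getElem_append_right le_rfl]
      simp
    rw [hget, List.set_append, if_neg (lt_irrefl _), if_pos hc]
    simp
  · rw [dif_neg (by rw [htake]; tauto), if_neg hc]

/-- The flip automorphism as a permutation. -/
def flipPerm (m : ℕ) (c : W → Bool) : Equiv.Perm W := (flipFn_invol m c).toPerm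

lemma flipPerm_apply (m : ℕ) (c : W → Bool) (w : W) : flipPerm m c w = flipFn m c w := rfl

lemma flipFn_prefix {m : ℕ} {c : W → Bool} {v w : W} (h : v <+: w) :
    flipFn m c v <+: flipFn m c w := by
  obtain ⟨t, rfl⟩ := h
  by_cases hm : m < v.length
  · rw [flipFn_append_of_lt hm]
    exact List.prefix_append _ _
  · rw [flipFn_of_le (le_of_not_gt hm)]
    unfold flipFn
    split
    · rw [List.prefix_iff_eq_take]
      rw [take_set_of_le _ _ (le_of_not_gt hm), List.take_left]
    · exact List.prefix_append _ _

lemma isTreeAut_flipPerm (m : ℕ) (c : W → Bool) : IsTreeAut (flipPerm m c) := by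
  constructor
  · intro v; exact length_flipFn m c v
  · intro v w
    constructor
    · exact fun h => flipFn_prefix h
    · intro h
      have h2 := flipFn_prefix (m := m) (c := c) h
      rw [flipPerm_apply, flipPerm_apply] at h
      have := flipFn_prefix (m := m) (c := c) h
      rwa [flipFn_invol, flipFn_invol] at this

/-- `g` acts on each odd coordinate by a uniform (prefix-independent) flip. -/
def Flips (g : Equiv.Perm W) : Prop :=
  ∀ m : ℕ, m % 2 = 1 → ∃ e : Fin 2, ∀ p : W, p.length = m → ∀ s : Fin 2,
    g (p ++ [s]) = g p ++ [s + e]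

def Good (g : Equiv.Perm W) : Prop := IsTreeAut g ∧ Flips g

lemma good_flipPerm (M : ℕ) (c : W → Bool) (hM : M % 2 = 1 → ∀ p, c p = true) :
    Good (flipPerm M c) := by
  refine ⟨isTreeAut_flipPerm M c, ?_⟩
  intro m hm
  rcases lt_trichotomy M m with hlt | rfl | hgt
  · refine ⟨0, fun p hp s => ?_⟩
    rw [flipPerm_apply, flipPerm_apply, flipFn_append_of_lt (by omega), add_zero]
  · refine ⟨1, fun p hp s => ?_⟩
    rw [flipPerm_apply, flipPerm_apply, flipFn_concat_eq hp, flipFn_of_le hp.le,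
      if_pos (hM hm p)]
  · refine ⟨0, fun p hp s => ?_⟩
    rw [flipPerm_apply, flipPerm_apply, flipFn_of_le (by simp; omega),
      flipFn_of_le (by omega), add_zero]

lemma good_one : Good 1 := by
  refine ⟨⟨fun v => rfl, fun v w => Iff.rfl⟩, fun m hm => ⟨0, fun p hp s => by simp⟩⟩

lemma good_mul {g h : Equiv.Perm W} (hg : Good g) (hh : Good h) : Good (g * h) := by
  refine ⟨⟨fun v => by rw [Equiv.Perm.mul_apply, hg.1.1, hh.1.1],
    fun v w => (hh.1.2 v w).trans (hg.1.2 _ _)⟩, ?_⟩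
  intro m hm
  obtain ⟨eh, heh⟩ := hh.2 m hm
  obtain ⟨eg, heg⟩ := hg.2 m hm
  refine ⟨eh + eg, fun p hp s => ?_⟩
  rw [Equiv.Perm.mul_apply, Equiv.Perm.mul_apply, heh p hp s,
    heg (h p) (by rw [hh.1.1]; exact hp), add_assoc]

lemma perm_apply_inv_self (g : Equiv.Perm W) (x : W) : g (g⁻¹ x) = x :=
  g.apply_symm_apply x

lemma perm_inv_apply_self (g : Equiv.Perm W) (x : W) : g⁻¹ (g x) = x :=
  g.symm_apply_apply x

lemma good_inv {g : Equiv.Perm W} (hg : Good g) : Good g⁻¹ := by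
  have hlen : ∀ v : W, (g⁻¹ v).length = v.length := by
    intro v
    conv_rhs => rw [← perm_apply_inv_self g v]
    rw [hg.1.1]
  refine ⟨⟨hlen, ?_⟩, ?_⟩
  · intro v w
    constructor
    · intro h
      have := (hg.1.2 (g⁻¹ v) (g⁻¹ w)).mpr
      simp only [perm_apply_inv_self] at this
      exact this h
    · intro h
      have := (hg.1.2 (g⁻¹ v) (g⁻¹ w)).mp h
      simpa only [perm_apply_inv_self] using this
  · intro m hm
    obtain ⟨e, he⟩ := hg.2 m hm
    refine ⟨e, fun p hp s => ?_⟩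
    have hq : (g⁻¹ p).length = m := by rw [hlen]; exact hp
    have key : g (g⁻¹ p ++ [s + e]) = p ++ [s] := by
      rw [he _ hq, perm_apply_inv_self]
      congr 2
      have : ∀ a b : Fin 2, a + b + b = a := by decide
      exact this s e
    calc g⁻¹ (p ++ [s]) = g⁻¹ (g (g⁻¹ p ++ [s + e])) := by rw [key]
    _ = g⁻¹ p ++ [s + e] := perm_inv_apply_self g _

/-- Pad a word to even length. -/
def pad (u : W) : W := if u.length % 2 = 0 then u else u ++ [0]

lemma pad_even (u : W) : (pad u).length % 2 = 0 := by
  unfold pad; split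
  · assumption
  · simp; omega

lemma prefix_pad (u : W) : u <+: pad u := by
  unfold pad; split
  · exact List.prefix_refl u
  · exact List.prefix_append _ _

/-- Generator flipping the letter right below the vertex `pad u`. -/
def genA (u : W) : Equiv.Perm W := flipPerm (pad u).length (fun p => decide (p = pad u))

/-- Generator flipping the whole odd level `2k+1`. -/
def genB (k : ℕ) : Equiv.Perm W := flipPerm (2 * k + 1) (fun _ => true)

def gens : Set (Equiv.Perm W) := Set.range (Sum.elim genA genB)

/-- Our weakly branch group. -/
def Gmy : Subgroup (Equiv.Perm W) := Subgroup.closure gens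

lemma good_gens {g : Equiv.Perm W} (hg : g ∈ gens) : Good g := by
  obtain ⟨i, rfl⟩ := hg
  cases i with
  | inl u =>
      exact good_flipPerm _ _ (fun h => absurd (pad_even u) (by omega))
  | inr k =>
      exact good_flipPerm _ _ (fun _ _ => rfl)

lemma good_mem {g : Equiv.Perm W} (hg : g ∈ Gmy) : Good g := by
  induction hg using Subgroup.closure_induction with
  | mem x hx => exact good_gens hx
  | one => exact good_one
  | mul x y hx hy ihx ihy => exact good_mul ihx ihy
  | inv x hx ihx => exact good_inv ihx

lemma countable_Gmy : Countable Gmy := by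
  have hgens : gens.Countable := Set.countable_range _
  have hU : (gens ∪ gens⁻¹).Countable := by
    refine hgens.union ?_
    rw [← Set.image_inv_eq_inv]
    exact hgens.image _
  have himg : {l : List (Equiv.Perm W) | ∀ y ∈ l, y ∈ gens ∪ gens⁻¹}.Countable := by
    rw [← Set.range_list_map_coe]
    haveI := hU.to_subtype
    exact Set.countable_range _
  have hsub : (Gmy : Set (Equiv.Perm W)) ⊆ List.prod '' {l | ∀ y ∈ l, y ∈ gens ∪ gens⁻¹} := by
    intro x hx
    have hx' : x ∈ Submonoid.closure (gens ∪ gens⁻¹) := by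
      have : x ∈ (Subgroup.closure gens).toSubmonoid := hx
      rwa [Subgroup.closure_toSubmonoid] at this
    obtain ⟨l, hl, hp⟩ := Submonoid.exists_list_of_mem_closure hx'
    exact ⟨l, hl, hp⟩
  have : (Gmy : Set (Equiv.Perm W)).Countable := (himg.image List.prod).mono hsub
  exact this.to_subtype

lemma treeAut_concat {g : Equiv.Perm W} (hg : IsTreeAut g) (p : W) (s : Fin 2) :
    ∃ t : Fin 2, g (p ++ [s]) = g p ++ [t] := by
  have hpre : g p <+: g (p ++ [s]) := (hg.2 _ _).mp (List.prefix_append _ _)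
  obtain ⟨r, hr⟩ := hpre
  have hlen : r.length = 1 := by
    have h1 := hg.1 (p ++ [s])
    have h2 := hg.1 p
    have h3 := congrArg List.length hr
    rw [h1] at h3
    simp only [List.length_append, List.length_singleton, h2] at h3
    omega
  obtain ⟨t, rfl⟩ := List.length_eq_one_iff.mp hlen
  exact ⟨t, hr.symm⟩

lemma flipPerm_concat_self {M : ℕ} {c : W → Bool} {p : W} (hp : p.length = M)
    (hc : c p = true) (s : Fin 2) : flipPerm M c (p ++ [s]) = p ++ [s + 1] := by
  rw [flipPerm_apply, flipFn_concat_eq hp, if_pos hc]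

lemma level_transitive_aux : ∀ n (v w : W), v.length = n → w.length = n →
    ∃ g ∈ Gmy, g v = w := by
  intro n
  induction n with
  | zero =>
      intro v w hv hw
      rw [List.length_eq_zero_iff] at hv hw
      subst hv; subst hw
      exact ⟨1, one_mem _, rfl⟩
  | succ n ih =>
      intro v w hv hw
      rcases List.eq_nil_or_concat v with rfl | ⟨v', s, rfl⟩
      · simp at hv
      rcases List.eq_nil_or_concat w with rfl | ⟨w', t, rfl⟩
      · simp at hw
      simp only [List.concat_eq_append, List.length_append, List.length_singleton] at hv hw
      obtain ⟨g, hgmem, hgv⟩ := ih v' w' (by omega) (by omega)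
      have hgood := good_mem hgmem
      obtain ⟨r, hr⟩ := treeAut_concat hgood.1 v' s
      rw [hgv] at hr
      by_cases hrt : r = t
      · exact ⟨g, hgmem, by rw [List.concat_eq_append, List.concat_eq_append, hr, hrt]⟩
      · have hw'len : w'.length = n := by omega
        have hflip : ∃ h ∈ gens, h (w' ++ [r]) = w' ++ [r + 1] := by
          by_cases hn : n % 2 = 0
          · refine ⟨genA w', ⟨Sum.inl w', rfl⟩, ?_⟩
            have hpadw : pad w' = w' := by unfold pad; rw [if_pos (by omega)]
            exact flipPerm_concat_self (by rw [hpadw]) (by simp [hpadw]) r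
          · refine ⟨genB (n / 2), ⟨Sum.inr (n / 2), rfl⟩, ?_⟩
            exact flipPerm_concat_self (by omega) rfl r
        obtain ⟨h, hhgens, hh⟩ := hflip
        have hr1 : r + 1 = t := by
          have : ∀ a b : Fin 2, a ≠ b → a + 1 = b := by decide
          exact this r t hrt
        refine ⟨h * g, mul_mem (Subgroup.subset_closure hhgens) hgmem, ?_⟩
        rw [List.concat_eq_append, List.concat_eq_append, Equiv.Perm.mul_apply, hr, hh, hr1]


lemma level_transitive_Gmy : LevelTransitive Gmy := by
  intro v w h
  exact level_transitive_aux w.length v w h rfl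

lemma genA_rist (v : W) :
    (∀ w : W, ¬ v <+: w → genA v w = w) ∧ genA v ≠ 1 := by
  constructor
  · intro w hw
    rw [genA, flipPerm_apply]
    unfold flipFn
    rw [dif_neg]
    rintro ⟨h1, h2⟩
    apply hw
    refine (prefix_pad v).trans ?_
    rw [List.prefix_iff_eq_take]
    have := of_decide_eq_true h2
    exact this.symm
  · intro hcon
    have h1 : genA v (pad v ++ [0]) = pad v ++ [1] := by
      refine flipPerm_concat_self rfl (by simp) 0
    rw [hcon] at h1
    simp only [Equiv.Perm.one_apply] at h1
    have := List.append_cancel_left h1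
    simp at this

lemma length_prefixWord {d : ℕ} (x : Boundary d) (n : ℕ) : (prefixWord x n).length = n := by
  simp [prefixWord]

lemma prefixWord_succ {d : ℕ} (x : Boundary d) (n : ℕ) :
    prefixWord x (n + 1) = prefixWord x n ++ [x n] := by
  unfold prefixWord
  rw [List.ofFn_succ']
  simp [List.concat_eq_append]

lemma mem_cylinder_ofFn {d : ℕ} (x : Boundary d) {n : ℕ} (q : Fin n → Fin d) :
    x ∈ _root_.cylinder (List.ofFn q) ↔ ∀ j : Fin n, x j = q j := by
  unfold _root_.cylinder prefixWord
  simp only [Set.mem_setOf_eq, List.length_ofFn]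
  rw [List.ofFn_inj]
  exact funext_iff

lemma measurable_cylinder {d : ℕ} {n : ℕ} (q : Fin n → Fin d) :
    MeasurableSet (_root_.cylinder (List.ofFn q)) := by
  have : _root_.cylinder (List.ofFn q) = ⋂ j : Fin n, (fun x : Boundary d => x j) ⁻¹' {q j} := by
    ext x
    simp only [Set.mem_iInter, Set.mem_preimage, Set.mem_singleton_iff]
    exact mem_cylinder_ofFn x q
  rw [this]
  exact MeasurableSet.iInter fun j => (measurable_pi_apply _) (measurableSet_singleton _)

lemma coord_act {act : Equiv.Perm (Word 2) → Boundary 2 → Boundary 2}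
    (hact : IsBoundaryAction Gmy act) {g : Equiv.Perm (Word 2)} (hg : g ∈ Gmy)
    {m : ℕ} (hm : m % 2 = 1) : ∃ e : Fin 2, ∀ x : Boundary 2, act g x m = x m + e := by
  obtain ⟨e, he⟩ := (good_mem hg).2 m hm
  refine ⟨e, fun x => ?_⟩
  have h1 := hact g hg x (m + 1)
  rw [prefixWord_succ, prefixWord_succ, he _ (length_prefixWord x m), ← hact g hg x m] at h1
  have h2 := List.append_cancel_left h1
  simpa using h2

lemma weaklyBranch_Gmy : IsWeaklyBranch Gmy := by
  refine ⟨level_transitive_Gmy, fun v => ?_⟩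
  obtain ⟨hfix, hne⟩ := genA_rist v
  exact ⟨genA v, ⟨Subgroup.subset_closure ⟨Sum.inl v, rfl⟩, hfix⟩, hne⟩

lemma pow_two_calc (k : ℕ) :
    ((2 : ℝ≥0∞) ^ (2 * k) * 2 ^ k) * (2⁻¹ ^ (2 * k) * 2⁻¹ ^ (2 * k)) = 2⁻¹ ^ k := by
  have h : (2 : ℝ≥0∞) * 2⁻¹ = 1 := ENNReal.mul_inv_cancel two_ne_zero ENNReal.ofNat_ne_top
  have : ((2 : ℝ≥0∞) ^ (2 * k) * 2 ^ k) * (2⁻¹ ^ (2 * k) * 2⁻¹ ^ (2 * k)) =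
      ((2 * 2⁻¹ : ℝ≥0∞) ^ (3 * k)) * 2⁻¹ ^ k := by ring
  rw [this, h, one_pow, one_mul]


end ErgAux

open ErgAux in
/-- There is a countable weakly branch group `G` on the binary rooted tree and an `n` such that
the diagonal action of `G` on `(Xⁿ, μⁿ)` has no ergodic component of positive measure. -/
theorem exists_weaklyBranch_no_positive_ergodic_component :
    ∃ G : Subgroup (Equiv.Perm (Word 2)),
      (∀ g ∈ G, IsTreeAut g) ∧ Countable G ∧ IsWeaklyBranch G ∧
      ∃ n : ℕ,
        ∀ act : Equiv.Perm (Word 2) → Boundary 2 → Boundary 2, IsBoundaryAction G act →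
        ∀ μ : Measure (Boundary 2), IsProbabilityMeasure μ → IsUniformBernoulli μ →
          ¬ ∃ Y : Set (Fin n → Boundary 2),
              MeasurableSet Y ∧ 0 < (Measure.pi fun _ : Fin n => μ) Y ∧
              (∀ g ∈ G, diagAct act n g ⁻¹' Y = Y) ∧
              ∀ Z : Set (Fin n → Boundary 2), Z ⊆ Y → MeasurableSet Z →
                (∀ g ∈ G, diagAct act n g ⁻¹' Z = Z) →
                (Measure.pi fun _ : Fin n => μ) Z = 0 ∨
                (Measure.pi fun _ : Fin n => μ) (Y \ Z) = 0 := by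
  
  classical
  refine ⟨Gmy, fun g hg => (good_mem hg).1, countable_Gmy, weaklyBranch_Gmy, 2, ?_⟩
  intro act hact μ hprob hbern
  rintro ⟨Y, hYmeas, hYpos, hYinv, hmin⟩
  set ν : Measure (Fin 2 → Boundary 2) := Measure.pi fun _ => μ with hνdef
  have hbern2 : ∀ v : Word 2, μ (_root_.cylinder v) = (2 : ℝ≥0∞)⁻¹ ^ v.length := by
    intro v; rw [hbern v]; norm_num
  -- the invariant sets
  set C : ℕ → Set (Fin 2 → Boundary 2) :=
    (fun i => {p | p 0 (2 * i + 1) = p 1 (2 * i + 1)}) with hC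
  have measC : ∀ i : ℕ, MeasurableSet (C i) := by
    intro i
    have h0 : Measurable fun p : Fin 2 → Boundary 2 => p 0 (2 * i + 1) :=
      (measurable_pi_apply _).comp (measurable_pi_apply _)
    have h1 : Measurable fun p : Fin 2 → Boundary 2 => p 1 (2 * i + 1) :=
      (measurable_pi_apply _).comp (measurable_pi_apply _)
    exact measurableSet_eq_fun h0 h1
  have invC : ∀ i : ℕ, ∀ g ∈ Gmy, diagAct act 2 g ⁻¹' C i = C i := by
    intro i g hg
    obtain ⟨e, he⟩ := coord_act hact hg (m := 2 * i + 1) (by omega)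
    ext p
    simp only [Set.mem_preimage, hC, Set.mem_setOf_eq, diagAct, he]
    exact ⟨fun h => by simpa using h, fun h => by rw [h]⟩
  -- the signs
  set c : ℕ → Fin 2 := (fun i => if ν (Y ∩ C i) = 0 then 1 else 0) with hc
  set D : ℕ → Set (Fin 2 → Boundary 2) :=
    (fun i => {p | p 1 (2 * i + 1) = p 0 (2 * i + 1) + c i}) with hD
  have hYD : ∀ i : ℕ, ν (Y \ D i) = 0 := by
    intro i
    by_cases h0 : ν (Y ∩ C i) = 0
    · refine measure_mono_null ?_ h0
      rintro p ⟨hpY, hpD⟩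
      refine ⟨hpY, ?_⟩
      simp only [hD, Set.mem_setOf_eq, hc, if_pos h0] at hpD
      have : ∀ a b : Fin 2, ¬ b = a + 1 → a = b := by decide
      exact this _ _ hpD
    · rcases hmin (Y ∩ C i) Set.inter_subset_left (hYmeas.inter (measC i))
        (fun g hg => by rw [Set.preimage_inter, hYinv g hg, invC i g hg]) with h | h
      · exact absurd h h0
      · refine measure_mono_null ?_ h
        rintro p ⟨hpY, hpD⟩
        refine ⟨hpY, fun hpC => hpD ?_⟩
        simp only [hD, Set.mem_setOf_eq, hc, if_neg h0, add_zero]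
        exact hpC.2.symm
  -- choose k beating ν Y
  obtain ⟨k, hk⟩ := ENNReal.exists_inv_two_pow_lt (a := ν Y) hYpos.ne'
  -- the covering bound
  have hbound : ν (⋂ i : Fin k, D i) ≤ 2⁻¹ ^ k := by
    -- second word pattern
    set u : (Fin (2 * k) → Fin 2) → (Fin k → Fin 2) → Fin (2 * k) → Fin 2 :=
      (fun q b j => if j.val % 2 = 1 then q j + c (j.val / 2)
        else b ⟨j.val / 2, by have := j.isLt; omega⟩) with hu
    set S : (Fin (2 * k) → Fin 2) → (Fin k → Fin 2) → Set (Fin 2 → Boundary 2) :=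
      (fun q b => Set.pi Set.univ (fun j : Fin 2 =>
        if j = 0 then _root_.cylinder (List.ofFn q) else _root_.cylinder (List.ofFn (u q b)))) with hS
    have hcover : (⋂ i : Fin k, D i) ⊆ ⋃ q, ⋃ b, S q b := by
      intro p hp
      simp only [Set.mem_iInter] at hp
      refine Set.mem_iUnion.mpr ⟨fun j => p 0 j, Set.mem_iUnion.mpr
        ⟨fun i => p 1 (2 * i), ?_⟩⟩
      intro j _
      fin_cases j
      · simp only [hS, if_pos rfl]
        exact (mem_cylinder_ofFn _ _).mpr (fun j => rfl)
      · simp only [hS, if_neg (by decide : (1 : Fin 2) ≠ 0)]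
        refine (mem_cylinder_ofFn _ _).mpr (fun j => ?_)
        by_cases hj : j.val % 2 = 1
        · have hpj := hp ⟨j.val / 2, by have := j.isLt; omega⟩
          simp only [hD, Set.mem_setOf_eq] at hpj
          have harith : 2 * (j.val / 2) + 1 = j.val := by omega
          rw [harith] at hpj
          simp only [hu, if_pos hj]
          exact hpj
        · have harith : 2 * (j.val / 2) = j.val := by omega
          simp only [hu, if_neg hj]
          rw [harith]
          rfl
    have hSmeas : ∀ q b, ν (S q b) = 2⁻¹ ^ (2 * k) * 2⁻¹ ^ (2 * k) := by
      intro q b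
      rw [hS]
      simp only
      rw [hνdef, Measure.pi_pi, Fin.prod_univ_two]
      simp [hbern2]
    calc ν (⋂ i : Fin k, D i) ≤ ν (⋃ q, ⋃ b, S q b) := measure_mono hcover
      _ ≤ ∑' q, ν (⋃ b, S q b) := measure_iUnion_le _
      _ ≤ ∑' (q : Fin (2 * k) → Fin 2), ∑' (b : Fin k → Fin 2), ν (S q b) :=
          ENNReal.tsum_le_tsum (fun q => measure_iUnion_le _)
      _ = ∑' (_ : Fin (2 * k) → Fin 2), ∑' (_ : Fin k → Fin 2),
            (2⁻¹ ^ (2 * k) * 2⁻¹ ^ (2 * k) : ℝ≥0∞) := by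
          congr 1; funext q; congr 1; funext b; exact hSmeas q b
      _ = 2⁻¹ ^ k := by
          rw [tsum_fintype, tsum_fintype]
          simp only [Finset.sum_const, Finset.card_univ, nsmul_eq_mul]
          rw [Fintype.card_fun, Fintype.card_fun]
          simp only [Fintype.card_fin]
          rw [← pow_two_calc k]
          push_cast
          ring
  have hdiff : ν (Y \ ⋂ i : Fin k, D i) = 0 := by
    rw [Set.diff_iInter]
    exact measure_iUnion_null fun i => hYD i
  have hfinal : ν Y ≤ 2⁻¹ ^ k := by
    calc ν Y ≤ ν (Y ∩ ⋂ i : Fin k, D i) + ν (Y \ ⋂ i : Fin k, D i) :=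
          measure_le_inter_add_diff ν Y _
      _ ≤ ν (⋂ i : Fin k, D i) + 0 := by
          exact add_le_add (measure_mono Set.inter_subset_right) hdiff.le
      _ ≤ 2⁻¹ ^ k := by rw [add_zero]; exact hbound
  exact absurd hfinal (not_le.mpr hk)
end
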